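/- arXiv:0802.3305 — 2 statements merged into one kernel-verified Lean document; each statement's English description precedes it below -/
import Mathlib

section
/- (Tarski–Seidenberg, logical form, consequence) Let Φ be a first-order formula in the language of ordered fields with parameters in ℝ and free variables x_1, …, x_n (built from atomic formulas f(x_1,…,x_n) = 0 and g(x_1,…,x_n) > 0 with f, g real polynomials, using finitely many conjunctions, disjunctions, negations, and universal and existential quantifiers). Then the set S_Φ := {x ∈ ℝ^n | Φ(x) holds} is a semialgebraic subset of ℝ^n. -/
/-- A basic semialgebraic set: defined by finitely many polynomial strict
inequalities and equalities. -/
def IsBasicSemialgebraic {n : ℕ} (S : Set (Fin n → ℝ)) : Prop :=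
  ∃ (s t : ℕ) (f : Fin s → MvPolynomial (Fin n) ℝ) (g : Fin t → MvPolynomial (Fin n) ℝ),
    S = {x | (∀ i, 0 < MvPolynomial.eval x (f i)) ∧ (∀ j, MvPolynomial.eval x (g j) = 0)}

/-- A semialgebraic subset of `ℝ^n`: a finite union of basic semialgebraic sets. -/
def IsSemialgebraic {n : ℕ} (A : Set (Fin n → ℝ)) : Prop :=
  ∃ (r : ℕ) (S : Fin r → Set (Fin n → ℝ)),
    (∀ i, IsBasicSemialgebraic (S i)) ∧ A = ⋃ i, S i

/-- A map defined on a subset `A ⊆ ℝ^m` with values in `ℝ^n` is semialgebraic if its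
graph `{(x, f x) | x ∈ A} ⊆ ℝ^{m+n}` is a semialgebraic set. -/
def IsSemialgebraicMapOn {m n : ℕ} (A : Set (Fin m → ℝ))
    (f : (Fin m → ℝ) → (Fin n → ℝ)) : Prop :=
  IsSemialgebraic {z : Fin (m + n) → ℝ | ∃ x ∈ A, z = Fin.append x (f x)}

/-- A real-valued function on a subset `A ⊆ ℝ^n` is semialgebraic if its graph
is a semialgebraic subset of `ℝ^{n+1}`. -/
def IsSemialgebraicFunOn {n : ℕ} (A : Set (Fin n → ℝ)) (f : (Fin n → ℝ) → ℝ) : Prop :=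
  IsSemialgebraic {z : Fin (n + 1) → ℝ | ∃ x ∈ A, z = Fin.snoc x (f x)}

/-- First-order formulas in the language of ordered fields with parameters in the reals,
with free variables among the first n variables (quantification in de Bruijn style). -/
inductive RealFormula : ℕ → Type where
  | eq : {n : ℕ} → MvPolynomial (Fin n) ℝ → RealFormula n
  | pos : {n : ℕ} → MvPolynomial (Fin n) ℝ → RealFormula n
  | and : {n : ℕ} → RealFormula n → RealFormula n → RealFormula n
  | or : {n : ℕ} → RealFormula n → RealFormula n → RealFormula n
  | not : {n : ℕ} → RealFormula n → RealFormula n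
  | ex : {n : ℕ} → RealFormula (n + 1) → RealFormula n
  | all : {n : ℕ} → RealFormula (n + 1) → RealFormula n

/-- Interpretation of a formula at a point of ℝⁿ. -/
def RealFormula.Holds : {n : ℕ} → RealFormula n → (Fin n → ℝ) → Prop
  | _, .eq f, x => MvPolynomial.eval x f = 0
  | _, .pos g, x => 0 < MvPolynomial.eval x g
  | _, .and φ ψ, x => φ.Holds x ∧ ψ.Holds x
  | _, .or φ ψ, x => φ.Holds x ∨ ψ.Holds x
  | _, .not φ, x => ¬ φ.Holds x
  | _, .ex φ, x => ∃ t : ℝ, φ.Holds (Fin.snoc x t)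
  | _, .all φ, x => ∀ t : ℝ, φ.Holds (Fin.snoc x t)

namespace TS

open MvPolynomial Set

variable {n : ℕ}

lemma isBasic_list (fs gs : List (MvPolynomial (Fin n) ℝ)) :
    IsBasicSemialgebraic {x | (∀ f ∈ fs, 0 < eval x f) ∧ (∀ g ∈ gs, eval x g = 0)} := by
  refine ⟨fs.length, gs.length, fun i => fs.get i, fun j => gs.get j, ?_⟩
  ext x
  simp only [Set.mem_setOf_eq]
  constructor
  · rintro ⟨h1, h2⟩
    exact ⟨fun i => h1 _ (fs.get_mem i), fun j => h2 _ (gs.get_mem j)⟩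
  · rintro ⟨h1, h2⟩
    refine ⟨fun f hf => ?_, fun g hg => ?_⟩
    · obtain ⟨i, rfl⟩ := List.mem_iff_get.mp hf; exact h1 i
    · obtain ⟨j, rfl⟩ := List.mem_iff_get.mp hg; exact h2 j

lemma isBasic_iff_list {S : Set (Fin n → ℝ)} :
    IsBasicSemialgebraic S ↔ ∃ fs gs : List (MvPolynomial (Fin n) ℝ),
      S = {x | (∀ f ∈ fs, 0 < eval x f) ∧ (∀ g ∈ gs, eval x g = 0)} := by
  constructor
  · rintro ⟨s, t, f, g, rfl⟩
    refine ⟨List.ofFn f, List.ofFn g, ?_⟩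
    ext x
    simp only [Set.mem_setOf_eq, List.mem_ofFn]
    constructor
    · rintro ⟨h1, h2⟩
      exact ⟨by rintro f' ⟨i, rfl⟩; exact h1 i, by rintro g' ⟨j, rfl⟩; exact h2 j⟩
    · rintro ⟨h1, h2⟩
      exact ⟨fun i => h1 _ ⟨i, rfl⟩, fun j => h2 _ ⟨j, rfl⟩⟩
  · rintro ⟨fs, gs, rfl⟩
    exact isBasic_list fs gs

lemma basic_isSemialgebraic {S : Set (Fin n → ℝ)} (h : IsBasicSemialgebraic S) :
    IsSemialgebraic S :=
  ⟨1, fun _ => S, fun _ => h, by simp [Set.iUnion_const]⟩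

lemma isSemialgebraic_empty : IsSemialgebraic (∅ : Set (Fin n → ℝ)) :=
  ⟨0, fun i => i.elim0, fun i => i.elim0, by simp⟩

lemma isSemialgebraic_univ : IsSemialgebraic (univ : Set (Fin n → ℝ)) := by
  refine basic_isSemialgebraic ?_
  rw [isBasic_iff_list]
  exact ⟨[], [], by simp⟩

lemma isSemialgebraic_iUnion_basic {ι : Type} [Fintype ι] (S : ι → Set (Fin n → ℝ))
    (h : ∀ i, IsBasicSemialgebraic (S i)) : IsSemialgebraic (⋃ i, S i) := by
  let e := Fintype.equivFin ι
  exact ⟨_, S ∘ e.symm, fun i => h _, (e.symm.surjective.iUnion_comp fun y => S y).symm⟩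

lemma isSemialgebraic_iUnion {ι : Type} [Fintype ι] (S : ι → Set (Fin n → ℝ))
    (h : ∀ i, IsSemialgebraic (S i)) : IsSemialgebraic (⋃ i, S i) := by
  choose r T hT hST using h
  have : (⋃ i, S i) = ⋃ p : Σ i : ι, Fin (r i), T p.1 p.2 := by
    ext x
    simp only [mem_iUnion, Sigma.exists]
    constructor
    · rintro ⟨i, hi⟩
      rw [hST i] at hi
      obtain ⟨j, hj⟩ := mem_iUnion.mp hi
      exact ⟨i, j, hj⟩
    · rintro ⟨i, j, hj⟩
      exact ⟨i, by rw [hST i]; exact mem_iUnion.mpr ⟨j, hj⟩⟩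
  rw [this]
  exact isSemialgebraic_iUnion_basic _ fun p => hT p.1 p.2

lemma basic_inter {S T : Set (Fin n → ℝ)} (hS : IsBasicSemialgebraic S)
    (hT : IsBasicSemialgebraic T) : IsBasicSemialgebraic (S ∩ T) := by
  rw [isBasic_iff_list] at hS hT ⊢
  obtain ⟨fs, gs, rfl⟩ := hS
  obtain ⟨fs', gs', rfl⟩ := hT
  refine ⟨fs ++ fs', gs ++ gs', ?_⟩
  ext x
  simp only [Set.mem_inter_iff, Set.mem_setOf_eq, List.mem_append]
  constructor
  · rintro ⟨⟨h1, h2⟩, h3, h4⟩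
    exact ⟨fun f hf => hf.elim (h1 f) (h3 f), fun g hg => hg.elim (h2 g) (h4 g)⟩
  · rintro ⟨h1, h2⟩
    exact ⟨⟨fun f hf => h1 f (Or.inl hf), fun g hg => h2 g (Or.inl hg)⟩,
      fun f hf => h1 f (Or.inr hf), fun g hg => h2 g (Or.inr hg)⟩

lemma sa_inter {S T : Set (Fin n → ℝ)} (hS : IsSemialgebraic S)
    (hT : IsSemialgebraic T) : IsSemialgebraic (S ∩ T) := by
  obtain ⟨r, A, hA, rfl⟩ := hS
  obtain ⟨r', B, hB, rfl⟩ := hT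
  have : (⋃ i, A i) ∩ (⋃ j, B j) = ⋃ p : Fin r × Fin r', A p.1 ∩ B p.2 := by
    ext x
    simp only [mem_inter_iff, mem_iUnion, Prod.exists]
    tauto
  rw [this]
  exact isSemialgebraic_iUnion_basic _ fun p => basic_inter (hA p.1) (hB p.2)

lemma sa_union {S T : Set (Fin n → ℝ)} (hS : IsSemialgebraic S)
    (hT : IsSemialgebraic T) : IsSemialgebraic (S ∪ T) := by
  have : S ∪ T = ⋃ b : Bool, (if b then S else T) := by
    ext x; simp only [mem_union, mem_iUnion, Bool.exists_bool]; tauto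
  rw [this]
  exact isSemialgebraic_iUnion _ (by rintro (_|_) <;> simpa using (by assumption))

lemma isSemialgebraic_le (f : MvPolynomial (Fin n) ℝ) :
    IsSemialgebraic {x | eval x f ≤ 0} := by
  have : {x : Fin n → ℝ | eval x f ≤ 0} = {x | eval x f = 0} ∪ {x | 0 < eval x (-f)} := by
    ext x
    simp only [mem_setOf_eq, mem_union, map_neg]
    constructor
    · intro h; rcases eq_or_lt_of_le h with h | h
      · exact Or.inl h
      · exact Or.inr (by linarith)
    · rintro (h | h) <;> linarith
  rw [this]
  refine sa_union ?_ ?_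
  · refine basic_isSemialgebraic ?_
    rw [isBasic_iff_list]
    exact ⟨[], [f], by ext x; simp⟩
  · refine basic_isSemialgebraic ?_
    rw [isBasic_iff_list]
    exact ⟨[-f], [], by ext x; simp⟩

lemma isSemialgebraic_ne (g : MvPolynomial (Fin n) ℝ) :
    IsSemialgebraic {x | eval x g ≠ 0} := by
  have : {x : Fin n → ℝ | eval x g ≠ 0} = {x | 0 < eval x g} ∪ {x | 0 < eval x (-g)} := by
    ext x
    simp only [mem_setOf_eq, mem_union, map_neg]
    constructor
    · intro h; rcases h.lt_or_gt with h | h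
      · exact Or.inr (by linarith)
      · exact Or.inl h
    · rintro (h | h) <;> intro h' <;> rw [h'] at h <;> simp at h
  rw [this]
  refine sa_union ?_ ?_
  · refine basic_isSemialgebraic ?_
    rw [isBasic_iff_list]
    exact ⟨[g], [], by ext x; simp⟩
  · refine basic_isSemialgebraic ?_
    rw [isBasic_iff_list]
    exact ⟨[-g], [], by ext x; simp⟩

lemma basic_compl {S : Set (Fin n → ℝ)}
    (h : IsBasicSemialgebraic S) : IsSemialgebraic Sᶜ := by
  rw [isBasic_iff_list] at h
  obtain ⟨fs, gs, rfl⟩ := h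
  have : {x : Fin n → ℝ | (∀ f ∈ fs, 0 < eval x f) ∧ (∀ g ∈ gs, eval x g = 0)}ᶜ =
      (⋃ i : Fin fs.length, {x | eval x (fs.get i) ≤ 0}) ∪
        ⋃ j : Fin gs.length, {x | eval x (gs.get j) ≠ 0} := by
    ext x
    simp only [mem_compl_iff, mem_setOf_eq, mem_union, mem_iUnion, not_and_or, not_forall]
    constructor
    · rintro (⟨f, hf, hf'⟩ | ⟨g, hg, hg'⟩)
      · obtain ⟨i, rfl⟩ := List.mem_iff_get.mp hf
        exact Or.inl ⟨i, by linarith [not_lt.mp hf']⟩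
      · obtain ⟨j, rfl⟩ := List.mem_iff_get.mp hg
        exact Or.inr ⟨j, hg'⟩
    · rintro (⟨i, hi⟩ | ⟨j, hj⟩)
      · exact Or.inl ⟨fs.get i, fs.get_mem i, not_lt.mpr hi⟩
      · exact Or.inr ⟨gs.get j, gs.get_mem j, hj⟩
  rw [this]
  exact sa_union (isSemialgebraic_iUnion _ fun i => isSemialgebraic_le _)
    (isSemialgebraic_iUnion _ fun j => isSemialgebraic_ne _)

lemma isSemialgebraic_iInter {ι : Type} [Fintype ι] (S : ι → Set (Fin n → ℝ))
    (h : ∀ i, IsSemialgebraic (S i)) : IsSemialgebraic (⋂ i, S i) := by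
  classical
  have key : ∀ s : Finset ι, IsSemialgebraic (⋂ i ∈ s, S i) := by
    intro s
    induction s using Finset.induction_on with
    | empty => simpa using isSemialgebraic_univ
    | insert a s hx ih =>
      rw [Finset.set_biInter_insert]
      exact sa_inter (h _) ih
  have : (⋂ i, S i) = ⋂ i ∈ Finset.univ, S i := by simp
  rw [this]
  exact key _

lemma sa_compl {S : Set (Fin n → ℝ)} (h : IsSemialgebraic S) :
    IsSemialgebraic Sᶜ := by
  obtain ⟨r, A, hA, rfl⟩ := h
  rw [compl_iUnion]
  exact isSemialgebraic_iInter _ fun i => basic_compl (hA i)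

section PolyAnalysis

open Polynomial Set Filter

/-- Sign constancy on a root-free segment. -/
lemma sign_eval_eq_of_no_root (p : Polynomial ℝ) {s t : ℝ}
    (h : ∀ u ∈ uIcc s t, p.eval u ≠ 0) :
    SignType.sign (p.eval s) = SignType.sign (p.eval t) := by
  have hs := h s left_mem_uIcc
  have ht := h t right_mem_uIcc
  by_contra hne
  have h0 : (0 : ℝ) ∈ uIcc (p.eval s) (p.eval t) := by
    rcases lt_trichotomy (p.eval s) 0 with h1 | h1 | h1 <;>
      rcases lt_trichotomy (p.eval t) 0 with h2 | h2 | h2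
    · exact absurd (by rw [sign_neg h1, sign_neg h2]) hne
    · exact absurd h2 ht
    · exact mem_uIcc.mpr (Or.inl ⟨le_of_lt h1, le_of_lt h2⟩)
    · exact absurd h1 hs
    · exact absurd h1 hs
    · exact absurd h1 hs
    · exact mem_uIcc.mpr (Or.inr ⟨le_of_lt h2, le_of_lt h1⟩)
    · exact absurd h2 ht
    · exact absurd (by rw [sign_pos h1, sign_pos h2]) hne
  obtain ⟨u, hu, hu0⟩ := intermediate_value_uIcc (f := fun u => p.eval u)
    (p.continuous.continuousOn) h0
  exact h u hu hu0

/-- Strict monotonicity from positivity of the derivative polynomial on the interior. -/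
lemma strictMonoOn_eval_of_deriv_pos (p : Polynomial ℝ) (D : Set ℝ) (hD : Convex ℝ D)
    (h : ∀ u ∈ interior D, 0 < (derivative p).eval u) :
    StrictMonoOn (fun u => p.eval u) D := by
  refine strictMonoOn_of_deriv_pos hD p.continuous.continuousOn fun u hu => ?_
  rw [Polynomial.deriv]
  exact h u hu

lemma exists_abs_big_atTop (p : Polynomial ℝ) (hdeg : 0 < p.natDegree) (a M : ℝ) :
    ∃ u, a < u ∧ M < |p.eval u| := by
  have hdeg' : 0 < p.degree := natDegree_pos_iff_degree_pos.mp hdeg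
  have h1 := (Polynomial.abs_tendsto_atTop p hdeg').eventually_gt_atTop M
  have h2 : ∀ᶠ u in atTop, a < u := eventually_gt_atTop a
  obtain ⟨u, hu1, hu2⟩ := (h1.and h2).exists
  exact ⟨u, hu2, hu1⟩

lemma exists_abs_big_atBot (p : Polynomial ℝ) (hdeg : 0 < p.natDegree) (b M : ℝ) :
    ∃ u, u < b ∧ M < |p.eval u| := by
  have hq : (p.comp (-Polynomial.X)).natDegree = p.natDegree := by
    rw [natDegree_comp]
    simp
  obtain ⟨u, hu1, hu2⟩ := exists_abs_big_atTop (p.comp (-Polynomial.X)) (by rw [hq]; exact hdeg)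
    (-b) M
  refine ⟨-u, by linarith, ?_⟩
  rwa [eval_comp, Polynomial.eval_neg, Polynomial.eval_X] at hu2

/-- A polynomial of positive degree, strictly monotone on `[a, ∞)`, takes positive values there. -/
lemma exists_pos_of_strictMonoOn_Ici (p : Polynomial ℝ) (hdeg : 0 < p.natDegree) (a : ℝ)
    (hm : StrictMonoOn (fun u => p.eval u) (Ici a)) :
    ∃ u, a < u ∧ 0 < p.eval u := by
  obtain ⟨u, hu1, hu2⟩ := exists_abs_big_atTop p hdeg (a + 1) |p.eval (a + 1)|
  have hlt : p.eval (a + 1) < p.eval u :=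
    hm (mem_Ici.mpr (by linarith)) (mem_Ici.mpr (by linarith)) (by linarith)
  refine ⟨u, by linarith, ?_⟩
  by_contra hle
  push_neg at hle
  have h1 : |p.eval u| = -p.eval u := abs_of_nonpos hle
  have h2 : -p.eval (a+1) ≤ |p.eval (a + 1)| := neg_le_abs _
  linarith

/-- A polynomial of positive degree, strictly monotone on `(-∞, b]`, takes negative values there. -/
lemma exists_neg_of_strictMonoOn_Iic (p : Polynomial ℝ) (hdeg : 0 < p.natDegree) (b : ℝ)
    (hm : StrictMonoOn (fun u => p.eval u) (Iic b)) :
    ∃ u, u < b ∧ p.eval u < 0 := by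
  obtain ⟨u, hu1, hu2⟩ := exists_abs_big_atBot p hdeg (b - 1) |p.eval (b - 1)|
  have hlt : p.eval u < p.eval (b - 1) :=
    hm (mem_Iic.mpr (by linarith)) (mem_Iic.mpr (by linarith)) (by linarith)
  refine ⟨u, by linarith, ?_⟩
  by_contra hle
  push_neg at hle
  have h1 : |p.eval u| = p.eval u := abs_of_nonneg hle
  have h2 : p.eval (b-1) ≤ |p.eval (b - 1)| := le_abs_self _
  linarith

end PolyAnalysis
section Glue

open Set

/-- Gluing two strictly monotone surjections that agree at a point. -/
lemma glue_strictMono {f g : ℝ → ℝ} {c : ℝ} (hf : StrictMono f) (hg : StrictMono g)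
    (hfs : Function.Surjective f) (hgs : Function.Surjective g) (hc : f c = g c) :
    StrictMono (fun t => if t ≤ c then f t else g t) ∧
      Function.Surjective (fun t => if t ≤ c then f t else g t) := by
  constructor
  · intro s t hst
    by_cases hs : s ≤ c <;> by_cases ht : t ≤ c <;> simp only [hs, ht, if_pos, if_neg, if_true,
      if_false]
    · exact hf hst
    · calc f s ≤ f c := hf.le_iff_le.mpr hs
        _ = g c := hc
        _ < g t := hg (by push_neg at ht; exact ht)
    · exact absurd (hst.trans_le ht) (by push_neg at hs; exact fun h => absurd hs (not_lt.mpr h.le))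
    · exact hg hst
  · intro v
    by_cases hv : v ≤ f c
    · obtain ⟨u, hu⟩ := hfs v
      have hu' : u ≤ c := by
        by_contra h
        push_neg at h
        have := hf h
        rw [hu] at this
        linarith
      exact ⟨u, by simp [hu', hu]⟩
    · obtain ⟨u, hu⟩ := hgs v
      push_neg at hv
      have hu' : ¬u ≤ c := by
        intro h
        have := hg.le_iff_le.mpr h
        rw [hu, ← hc] at this
        linarith
      exact ⟨u, by simp [hu', hu]⟩

lemma affine_strictMono {k : ℝ} (hk : 0 < k) (b A : ℝ) :
    StrictMono (fun t => A + (t - b) * k) ∧ Function.Surjective (fun t => A + (t - b) * k) := by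
  constructor
  · intro s t hst
    dsimp only
    nlinarith
  · intro v
    refine ⟨b + (v - A) / k, ?_⟩
    dsimp only
    field_simp
    ring

lemma translate_strictMono (d : ℝ) :
    StrictMono (fun t => t + d) ∧ Function.Surjective (fun t => t + d) :=
  ⟨fun s t hst => by dsimp only; linarith, fun v => ⟨v - d, by dsimp only; ring⟩⟩

/-- Any strictly monotone function on a finite set extends to a strictly monotone
surjection of `ℝ`. -/
lemma pwExtend {s : Finset ℝ} {β : ℝ → ℝ} (hβ : StrictMonoOn β ↑s) :
    ∃ φ : ℝ → ℝ, StrictMono φ ∧ Function.Surjective φ ∧ ∀ w ∈ s, φ w = β w := by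
  classical
  induction s using Finset.induction_on_max generalizing β with
  | empty => exact ⟨id, strictMono_id, Function.surjective_id, by simp⟩
  | insert a s ha ih =>
    rcases s.eq_empty_or_nonempty with rfl | hne
    · obtain ⟨hm, hs⟩ := translate_strictMono (β a - a)
      exact ⟨_, hm, hs, by simp⟩
    · have hsub : StrictMonoOn β ↑s := hβ.mono (by simp [Set.subset_insert])
      obtain ⟨φ₀, hφ₀m, hφ₀s, hφ₀e⟩ := ih hsub
      set b := s.max' hne with hb
      have hbs : b ∈ s := s.max'_mem hne
      have hba : b < a := ha b hbs
      have hβba : β b < β a := hβ (by simp [hbs]) (by simp) hba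
      -- middle affine piece from (b, β b) to (a, β a)
      set k := (β a - β b) / (a - b) with hk
      have hkpos : 0 < k := div_pos (by linarith) (by linarith)
      obtain ⟨hmm, hms⟩ := affine_strictMono hkpos b (β b)
      set m : ℝ → ℝ := fun t => β b + (t - b) * k with hm
      have hmb : m b = β b := by simp [hm]
      have hma : m a = β a := by
        have hab : a - b ≠ 0 := by linarith
        simp only [hm, hk]
        field_simp
        ring
      -- right translation piece
      obtain ⟨hrm, hrs⟩ := translate_strictMono (β a - a)
      set rr : ℝ → ℝ := fun t => t + (β a - a) with hr
      have hra : rr a = β a := by simp [hr]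
      -- glue φ₀ and m at b
      have hφ₀b : φ₀ b = m b := by rw [hmb, hφ₀e b hbs]
      obtain ⟨hFm, hFs⟩ := glue_strictMono hφ₀m hmm hφ₀s hms hφ₀b
      set F : ℝ → ℝ := fun t => if t ≤ b then φ₀ t else m t with hF
      -- glue F and rr at a
      have hFa : F a = rr a := by
        have : ¬a ≤ b := by linarith
        simp only [hF, this, if_false]
        rw [hma, hra]
      obtain ⟨hGm, hGs⟩ := glue_strictMono hFm hrm hFs hrs hFa
      refine ⟨_, hGm, hGs, ?_⟩
      intro w hw
      rcases Finset.mem_insert.mp hw with rfl | hws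
      · simp only [le_refl, if_pos]
        exact hFa.trans hra
      · have hwb : w ≤ b := s.le_max' w hws
        have hwa : w ≤ a := by linarith
        simp only [hwa, if_pos, hF, hwb]
        exact hφ₀e w hws

end Glue
section Prem

open Polynomial

variable {A : Type*} [CommRing A] [Nontrivial A]

lemma prem_exists_aux (q : Polynomial A) (hq : 1 ≤ q.natDegree) :
    ∀ N : ℕ, ∀ p : Polynomial A, p.natDegree ≤ N →
      ∃ r : Polynomial A, r.natDegree < q.natDegree ∧
        ∃ (k : ℕ) (h : Polynomial A), Polynomial.C q.leadingCoeff ^ k * p = h * q + r := by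
  intro N
  induction N with
  | zero =>
    intro p hp
    exact ⟨p, by omega, 0, 0, by ring⟩
  | succ N ihN =>
    intro p hp
    by_cases hlt : p.natDegree < q.natDegree
    · exact ⟨p, hlt, 0, 0, by ring⟩
    · push_neg at hlt
      have hp0 : p ≠ 0 := by
        intro h
        rw [h, natDegree_zero] at hlt
        omega
      set e := p.natDegree - q.natDegree with he
      set p₁ := Polynomial.C q.leadingCoeff * p - Polynomial.C p.leadingCoeff * (q * Polynomial.X ^ e) with hp₁
      have hterm : (Polynomial.C p.leadingCoeff * (q * Polynomial.X ^ e)).coeff p.natDegree =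
          p.leadingCoeff * q.leadingCoeff := by
        rw [Polynomial.coeff_C_mul, coeff_mul_X_pow']
        rw [if_pos (by omega : e ≤ p.natDegree)]
        have : p.natDegree - e = q.natDegree := by omega
        rw [this, coeff_natDegree]
      have hcoeff : p₁.coeff p.natDegree = 0 := by
        rw [hp₁, Polynomial.coeff_sub, Polynomial.coeff_C_mul, coeff_natDegree, hterm]
        ring
      have hdegle : p₁.natDegree ≤ p.natDegree := by
        refine le_trans (natDegree_sub_le _ _) (max_le (natDegree_C_mul_le _ _) ?_)
        refine le_trans (natDegree_C_mul_le _ _) (le_trans (natDegree_mul_le) ?_)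
        rw [Polynomial.natDegree_X_pow]
        omega
      have hdeg1 : p₁.natDegree ≤ N := by
        rcases eq_or_ne p₁ 0 with h0 | h0
        · rw [h0, natDegree_zero]; omega
        · have : p₁.natDegree ≠ p.natDegree := by
            intro heq
            have := coeff_natDegree (p := p₁)
            rw [heq, hcoeff] at this
            exact leadingCoeff_ne_zero.mpr h0 this.symm
          omega
      obtain ⟨r, hr, k, h, hEq⟩ := ihN p₁ hdeg1
      refine ⟨r, hr, k + 1, h + Polynomial.C q.leadingCoeff ^ k * Polynomial.C p.leadingCoeff * Polynomial.X ^ e, ?_⟩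
      rw [hp₁] at hEq
      linear_combination hEq

lemma prem_exists (p q : Polynomial A) (hq : 1 ≤ q.natDegree) :
    ∃ r : Polynomial A, r.natDegree < q.natDegree ∧
      ∃ (k : ℕ) (h : Polynomial A), Polynomial.C q.leadingCoeff ^ k * p = h * q + r :=
  prem_exists_aux q hq p.natDegree p le_rfl

/-- Pseudo-remainder of `p` by `q` (junk value `0` when `q` has degree `0`). -/
noncomputable def prem (p q : Polynomial A) : Polynomial A :=
  if hq : 1 ≤ q.natDegree then (prem_exists p q hq).choose else 0

lemma prem_natDegree_lt (p q : Polynomial A) (hq : 1 ≤ q.natDegree) :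
    (prem p q).natDegree < q.natDegree := by
  rw [prem, dif_pos hq]
  exact (prem_exists p q hq).choose_spec.1

lemma prem_spec (p q : Polynomial A) (hq : 1 ≤ q.natDegree) :
    ∃ (k : ℕ) (h : Polynomial A), Polynomial.C q.leadingCoeff ^ k * p = h * q + prem p q := by
  rw [prem, dif_pos hq]
  exact (prem_exists p q hq).choose_spec.2

lemma prem_natDegree_le (p q : Polynomial A) : (prem p q).natDegree ≤ q.natDegree - 1 := by
  by_cases hq : 1 ≤ q.natDegree
  · have := prem_natDegree_lt p q hq
    omega
  · rw [prem, dif_neg hq, natDegree_zero]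
    omega

end Prem
section Cells

open Polynomial Set

/-- The cell (maximal `W`-free interval) around `t`, on the parameter side. -/
def cellY (W : Set ℝ) (t : ℝ) : Set ℝ :=
  {s | (∀ w ∈ W, w < t → w < s) ∧ (∀ w ∈ W, t < w → s < w)}

/-- The corresponding cell on the image side of a monotone map `ψ`. -/
def cellX (W : Set ℝ) (ψ : ℝ → ℝ) (t : ℝ) : Set ℝ :=
  {u | (∀ w ∈ W, w < t → ψ w < u) ∧ (∀ w ∈ W, t < w → u < ψ w)}

lemma mem_cellY_self (W : Set ℝ) (t : ℝ) : t ∈ cellY W t :=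
  ⟨fun _ _ h => h, fun _ _ h => h⟩

lemma psi_mem_cellX (W : Set ℝ) {ψ : ℝ → ℝ} (hψ : StrictMono ψ) (t : ℝ) :
    ψ t ∈ cellX W ψ t :=
  ⟨fun _ _ h => hψ h, fun _ _ h => hψ h⟩

lemma convex_cellY (W : Set ℝ) (t : ℝ) : Convex ℝ (cellY W t) := by
  rw [convex_iff_ordConnected]
  constructor
  intro x hx y hy z hz
  exact ⟨fun w hw h => lt_of_lt_of_le (hx.1 w hw h) hz.1,
    fun w hw h => lt_of_le_of_lt hz.2 (hy.2 w hw h)⟩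

lemma convex_cellX (W : Set ℝ) (ψ : ℝ → ℝ) (t : ℝ) : Convex ℝ (cellX W ψ t) := by
  rw [convex_iff_ordConnected]
  constructor
  intro x hx y hy z hz
  exact ⟨fun w hw h => lt_of_lt_of_le (hx.1 w hw h) hz.1,
    fun w hw h => lt_of_le_of_lt hz.2 (hy.2 w hw h)⟩

lemma cellY_disjoint_W {W : Set ℝ} {t : ℝ} (ht : t ∉ W) {s : ℝ} (hs : s ∈ cellY W t) :
    s ∉ W := by
  intro hsW
  rcases lt_trichotomy s t with h | h | h
  · exact lt_irrefl s (hs.1 s hsW h)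
  · exact ht (h ▸ hsW)
  · exact lt_irrefl s (hs.2 s hsW h)

lemma cellX_ne_psi_W {W : Set ℝ} {ψ : ℝ → ℝ} {t : ℝ} (ht : t ∉ W) {u : ℝ}
    (hu : u ∈ cellX W ψ t) : ∀ w ∈ W, ψ w ≠ u := by
  intro w hw heq
  rcases lt_trichotomy w t with h | h | h
  · exact lt_irrefl u (heq ▸ hu.1 w hw h)
  · exact ht (h ▸ hw)
  · exact lt_irrefl u (heq ▸ hu.2 w hw h)

/-- Interior of `insert a D` is inside `D` when all of `D` lies above `a`. -/
lemma interior_insert_lb {D : Set ℝ} {a : ℝ} (ha : ∀ s ∈ D, a < s) :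
    interior (insert a D) ⊆ D := by
  intro u hu
  rcases (interior_subset hu : u ∈ insert a D) with rfl | h
  · exfalso
    obtain ⟨ε, hε, hball⟩ := Metric.mem_nhds_iff.mp (mem_interior_iff_mem_nhds.mp hu)
    have hmem : u - ε / 2 ∈ insert u D := by
      apply hball
      rw [Metric.mem_ball, Real.dist_eq]
      rw [abs_of_nonpos (by linarith)]
      linarith
    rcases hmem with heq | hmem
    · have : u - ε/2 = u := heq
      linarith
    · have := ha _ hmem
      linarith
  · exact h

lemma interior_insert_ub {D : Set ℝ} {b : ℝ} (hb : ∀ s ∈ D, s < b) :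
    interior (insert b D) ⊆ D := by
  intro u hu
  rcases (interior_subset hu : u ∈ insert b D) with rfl | h
  · exfalso
    obtain ⟨ε, hε, hball⟩ := Metric.mem_nhds_iff.mp (mem_interior_iff_mem_nhds.mp hu)
    have hmem : u + ε / 2 ∈ insert u D := by
      apply hball
      rw [Metric.mem_ball, Real.dist_eq]
      rw [abs_of_nonneg (by linarith)]
      linarith
    rcases hmem with heq | hmem
    · have : u + ε/2 = u := heq
      linarith
    · have := hb _ hmem
      linarith
  · exact h

lemma convex_insert_lb {D : Set ℝ} {a : ℝ} (hD : Convex ℝ D) (hlt : ∀ s ∈ D, a < s)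
    (hbetween : ∀ s ∈ D, ∀ z, a < z → z ≤ s → z ∈ D) : Convex ℝ (insert a D) := by
  rw [convex_iff_ordConnected] at hD ⊢
  constructor
  intro x hx y hy z hz
  rcases hx with rfl | hx <;> rcases hy with rfl | hy
  · exact mem_insert_iff.mpr (Or.inl (le_antisymm hz.2 hz.1))
  · rcases eq_or_lt_of_le hz.1 with rfl | h
    · exact mem_insert _ _
    · exact mem_insert_iff.mpr (Or.inr (hbetween y hy z h hz.2))
  · exfalso
    have := hlt x hx
    linarith [hz.1, hz.2]
  · exact mem_insert_iff.mpr (Or.inr (hD.out hx hy hz))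

lemma convex_insert_ub {D : Set ℝ} {b : ℝ} (hD : Convex ℝ D) (hlt : ∀ s ∈ D, s < b)
    (hbetween : ∀ s ∈ D, ∀ z, s ≤ z → z < b → z ∈ D) : Convex ℝ (insert b D) := by
  rw [convex_iff_ordConnected] at hD ⊢
  constructor
  intro x hx y hy z hz
  rcases hx with rfl | hx <;> rcases hy with rfl | hy
  · exact mem_insert_iff.mpr (Or.inl (le_antisymm hz.2 hz.1))
  · exfalso
    have := hlt y hy
    linarith [hz.1, hz.2]
  · rcases eq_or_lt_of_le hz.2 with rfl | h
    · exact mem_insert _ _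
    · exact mem_insert_iff.mpr (Or.inr (hbetween x hx z hz.1 h))
  · exact mem_insert_iff.mpr (Or.inr (hD.out hx hy hz))

end Cells
section CellAnalysis

open Polynomial Set

lemma cell_root_sign {W : Set ℝ} {ψ : ℝ → ℝ} {P Pb : Polynomial ℝ} {t : ℝ}
    (SMy : StrictMonoOn (fun s => Pb.eval s) (cellY W t))
    (SMx : StrictMonoOn (fun u => P.eval u) (cellX W ψ t))
    {c cb : ℝ} (hc : P.eval c = 0) (hcX : c ∈ cellX W ψ t)
    (hcb : Pb.eval cb = 0) (hcbY : cb ∈ cellY W t)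
    {s u : ℝ} (hs : s ∈ cellY W t) (hu : u ∈ cellX W ψ t)
    (hss : SignType.sign (s - cb) = SignType.sign (u - c)) :
    SignType.sign (P.eval u) = SignType.sign (Pb.eval s) := by
  rcases lt_trichotomy s cb with h | h | h
  · have h1 : SignType.sign (s - cb) = -1 := sign_neg (by linarith)
    have h2 : u < c := by
      by_contra hcon
      push_neg at hcon
      rcases eq_or_lt_of_le hcon with rfl | hlt
      · rw [h1, sub_self, sign_zero] at hss; exact absurd hss.symm (by decide)
      · rw [h1, sign_pos (by linarith)] at hss; exact absurd hss.symm (by decide)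
    have hy : Pb.eval s < Pb.eval cb := SMy hs hcbY h
    have hx : P.eval u < P.eval c := SMx hu hcX h2
    rw [hcb] at hy
    rw [hc] at hx
    rw [sign_neg hy, sign_neg hx]
  · subst h
    have h2 : u = c := by
      have : SignType.sign (u - c) = 0 := by rw [← hss, sub_self, sign_zero]
      have := sign_eq_zero_iff.mp this
      linarith
    subst h2
    rw [hc, hcb]
  · have h1 : SignType.sign (s - cb) = 1 := sign_pos (by linarith)
    have h2 : c < u := by
      by_contra hcon
      push_neg at hcon
      rcases eq_or_lt_of_le hcon with rfl | hlt
      · rw [h1, sub_self, sign_zero] at hss; exact absurd hss.symm (by decide)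
      · rw [h1, sign_neg (by linarith)] at hss; exact absurd hss.symm (by decide)
    have hy : Pb.eval cb < Pb.eval s := SMy hcbY hs h
    have hx : P.eval c < P.eval u := SMx hcX hu h2
    rw [hcb] at hy
    rw [hc] at hx
    rw [sign_pos hy, sign_pos hx]

lemma cell_main {W : Set ℝ} (hWfin : W.Finite) {ψ : ℝ → ℝ} (hψm : StrictMono ψ)
    {P Pb : Polynomial ℝ} {t : ℝ}
    (hP : 0 < P.natDegree) (hPb : 0 < Pb.natDegree) (ht : t ∉ W)
    (hdposy : ∀ s ∈ cellY W t, 0 < (derivative Pb).eval s)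
    (hdposx : ∀ u ∈ cellX W ψ t, 0 < (derivative P).eval u)
    (hH2 : ∀ w ∈ W, SignType.sign (P.eval (ψ w)) = SignType.sign (Pb.eval w)) :
    ((∃ cb ∈ cellY W t, Pb.eval cb = 0) → ∃ c ∈ cellX W ψ t, P.eval c = 0) ∧
    ((¬ ∃ cb ∈ cellY W t, Pb.eval cb = 0) → ∀ s ∈ cellY W t, ∀ u ∈ cellX W ψ t,
      SignType.sign (P.eval u) = SignType.sign (Pb.eval s)) := by
  classical
  have SMy : StrictMonoOn (fun s => Pb.eval s) (cellY W t) :=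
    strictMonoOn_eval_of_deriv_pos Pb _ (convex_cellY W t)
      (fun v hv => hdposy v (interior_subset hv))
  have SMx : StrictMonoOn (fun u => P.eval u) (cellX W ψ t) :=
    strictMonoOn_eval_of_deriv_pos P _ (convex_cellX W ψ t)
      (fun v hv => hdposx v (interior_subset hv))
  set FW := hWfin.toFinset with hFWdef
  have hFW : ∀ w, w ∈ FW ↔ w ∈ W := fun w => hWfin.mem_toFinset
  set lows := FW.filter (· < t) with hlowsdef
  set his := FW.filter (t < ·) with hhisdef
  -- helper : intermediate value
  have hIVT : ∀ (p : Polynomial ℝ) (x y : ℝ), x ≤ y → p.eval x < 0 → 0 < p.eval y →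
      ∃ r, x < r ∧ r < y ∧ p.eval r = 0 := by
    intro p x y hxy hx hy
    obtain ⟨r, hr, hr0⟩ := intermediate_value_Ioo hxy (p.continuous.continuousOn)
      (⟨hx, hy⟩ : (0:ℝ) ∈ Ioo (p.eval x) (p.eval y))
    exact ⟨r, hr.1, hr.2, hr0⟩
  have hmemlow : ∀ w ∈ W, w < t → w ∈ lows := by
    intro w hw hwt
    rw [hlowsdef]
    exact Finset.mem_filter.mpr ⟨(hFW w).mpr hw, hwt⟩
  have hmemhi : ∀ w ∈ W, t < w → w ∈ his := by
    intro w hw hwt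
    rw [hhisdef]
    exact Finset.mem_filter.mpr ⟨(hFW w).mpr hw, hwt⟩
  have hnolow : lows = ∅ → ∀ w ∈ W, ¬w < t := by
    intro h w hw hwt
    have h2 := hmemlow w hw hwt
    rw [h] at h2
    exact absurd h2 (Finset.notMem_empty w)
  have hnohi : his = ∅ → ∀ w ∈ W, ¬t < w := by
    intro h w hw hwt
    have h2 := hmemhi w hw hwt
    rw [h] at h2
    exact absurd h2 (Finset.notMem_empty w)
  -- empty-side subsets
  have hIciY : his = ∅ → Ici t ⊆ cellY W t := by
    intro h s hs
    exact ⟨fun w hw hwt => lt_of_lt_of_le hwt hs, fun w hw hwt => absurd hwt (hnohi h w hw)⟩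
  have hIicY : lows = ∅ → Iic t ⊆ cellY W t := by
    intro h s hs
    exact ⟨fun w hw hwt => absurd hwt (hnolow h w hw), fun w hw hwt => lt_of_le_of_lt hs hwt⟩
  have hIciX : his = ∅ → Ici (ψ t) ⊆ cellX W ψ t := by
    intro h u hu
    exact ⟨fun w hw hwt => lt_of_lt_of_le (hψm hwt) hu, fun w hw hwt => absurd hwt (hnohi h w hw)⟩
  have hIicX : lows = ∅ → Iic (ψ t) ⊆ cellX W ψ t := by
    intro h u hu
    exact ⟨fun w hw hwt => absurd hwt (hnolow h w hw), fun w hw hwt => lt_of_le_of_lt hu (hψm hwt)⟩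
  rcases lows.eq_empty_or_nonempty with hlo | hlo <;>
    rcases his.eq_empty_or_nonempty with hhi | hhi
  -- CASE 1 : both empty
  · constructor
    · rintro ⟨cb, hcbY, hcb0⟩
      obtain ⟨v₁, hv₁, hv₁0⟩ := exists_pos_of_strictMonoOn_Ici P hP (ψ t) (SMx.mono (hIciX hhi))
      obtain ⟨v₂, hv₂, hv₂0⟩ := exists_neg_of_strictMonoOn_Iic P hP (ψ t) (SMx.mono (hIicX hlo))
      obtain ⟨r, hr1, hr2, hr0⟩ := hIVT P v₂ v₁ (by linarith) hv₂0 hv₁0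
      refine ⟨r, ⟨fun w hw hwt => ?_, fun w hw hwt => ?_⟩, hr0⟩
      · exact absurd hwt (hnolow hlo w hw)
      · exact absurd hwt (hnohi hhi w hw)
    · intro hnr
      exfalso
      obtain ⟨v₁, hv₁, hv₁0⟩ := exists_pos_of_strictMonoOn_Ici Pb hPb t (SMy.mono (hIciY hhi))
      obtain ⟨v₂, hv₂, hv₂0⟩ := exists_neg_of_strictMonoOn_Iic Pb hPb t (SMy.mono (hIicY hlo))
      obtain ⟨r, hr1, hr2, hr0⟩ := hIVT Pb v₂ v₁ (by linarith) hv₂0 hv₁0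
      refine hnr ⟨r, ⟨fun w hw hwt => ?_, fun w hw hwt => ?_⟩, hr0⟩
      · exact absurd hwt (hnolow hlo w hw)
      · exact absurd hwt (hnohi hhi w hw)
  -- CASE 2 : lows empty, his nonempty
  · set b := his.min' hhi with hbdef
    have hbmem := his.min'_mem hhi
    have hbW : b ∈ W := (hFW b).mp (Finset.mem_filter.mp hbmem).1
    have hbt : t < b := (Finset.mem_filter.mp hbmem).2
    have hhile : ∀ w ∈ W, t < w → b ≤ w := fun w hw hwt =>
      his.min'_le w (hmemhi w hw hwt)
    have hCylt : ∀ s ∈ cellY W t, s < b := fun s hs => hs.2 b hbW hbt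
    have hCybet : ∀ s ∈ cellY W t, ∀ z, s ≤ z → z < b → z ∈ cellY W t := by
      intro s hs z h1 h2
      exact ⟨fun w hw hwt => lt_of_lt_of_le (hs.1 w hw hwt) h1,
        fun w hw hwt => lt_of_lt_of_le h2 (hhile w hw hwt)⟩
    have SMyb : StrictMonoOn (fun s => Pb.eval s) (insert b (cellY W t)) :=
      strictMonoOn_eval_of_deriv_pos Pb _
        (convex_insert_ub (convex_cellY W t) hCylt hCybet)
        (fun v hv => hdposy v (interior_insert_ub hCylt hv))
    have hCxlt : ∀ u ∈ cellX W ψ t, u < ψ b := fun u hu => hu.2 b hbW hbt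
    have hCxbet : ∀ u ∈ cellX W ψ t, ∀ z, u ≤ z → z < ψ b → z ∈ cellX W ψ t := by
      intro u hu z h1 h2
      exact ⟨fun w hw hwt => lt_of_lt_of_le (hu.1 w hw hwt) h1,
        fun w hw hwt => lt_of_lt_of_le h2 (hψm.le_iff_le.mpr (hhile w hw hwt))⟩
    have SMxb : StrictMonoOn (fun u => P.eval u) (insert (ψ b) (cellX W ψ t)) :=
      strictMonoOn_eval_of_deriv_pos P _
        (convex_insert_ub (convex_cellX W ψ t) hCxlt hCxbet)
        (fun v hv => hdposx v (interior_insert_ub hCxlt hv))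
    have hσb := hH2 b hbW
    constructor
    · rintro ⟨cb, hcbY, hcb0⟩
      have hPb : 0 < Pb.eval b := by
        have h := SMyb (mem_insert_of_mem _ hcbY) (mem_insert _ _) (hCylt cb hcbY)
        simpa [hcb0] using h
      have hxb : 0 < P.eval (ψ b) := by
        have := hσb
        rw [sign_pos hPb] at this
        exact (sign_eq_one_iff).mp this
      obtain ⟨v, hv, hv0⟩ := exists_neg_of_strictMonoOn_Iic P hP (ψ t) (SMx.mono (hIicX hlo))
      obtain ⟨r, hr1, hr2, hr0⟩ := hIVT P v (ψ b) (by linarith [hψm hbt]) hv0 hxb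
      refine ⟨r, ⟨fun w hw hwt => ?_, fun w hw hwt => ?_⟩, hr0⟩
      · exact absurd hwt (hnolow hlo w hw)
      · exact lt_of_lt_of_le hr2 (hψm.le_iff_le.mpr (hhile w hw hwt))
    · intro hnr s hs u hu
      rcases lt_trichotomy (Pb.eval b) 0 with hσ | hσ | hσ
      · -- σ = -1 : all values below Pb b < 0
        have hy : Pb.eval s < 0 := by
          have h := SMyb (mem_insert_of_mem _ hs) (mem_insert _ _) (hCylt s hs)
          simp only at h
          linarith
        have hxPb : P.eval (ψ b) < 0 := by
          have := hσb
          rw [sign_neg hσ] at this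
          exact (sign_eq_neg_one_iff).mp this
        have hx : P.eval u < 0 := by
          have h := SMxb (mem_insert_of_mem _ hu) (mem_insert _ _) (hCxlt u hu)
          simp only at h
          linarith
        rw [sign_neg hy, sign_neg hx]
      · -- σ = 0
        have hy : Pb.eval s < 0 := by
          have h := SMyb (mem_insert_of_mem _ hs) (mem_insert _ _) (hCylt s hs)
          simp only at h
          linarith
        have hxPb : P.eval (ψ b) = 0 := by
          have := hσb
          rw [hσ, sign_zero] at this
          exact sign_eq_zero_iff.mp this
        have hx : P.eval u < 0 := by
          have h := SMxb (mem_insert_of_mem _ hu) (mem_insert _ _) (hCxlt u hu)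
          simp only at h
          linarith
        rw [sign_neg hy, sign_neg hx]
      · -- σ = 1 : impossible (no root hypothesis violated)
        exfalso
        obtain ⟨v, hv, hv0⟩ := exists_neg_of_strictMonoOn_Iic Pb hPb t (SMy.mono (hIicY hlo))
        obtain ⟨r, hr1, hr2, hr0⟩ := hIVT Pb v b (by linarith) hv0 hσ
        refine hnr ⟨r, ⟨fun w hw hwt => ?_, fun w hw hwt => lt_of_lt_of_le hr2 (hhile w hw hwt)⟩, hr0⟩
        exact absurd hwt (hnolow hlo w hw)
  -- CASE 3 : lows nonempty, his empty
  · set a := lows.max' hlo with hadef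
    have hamem := lows.max'_mem hlo
    have haW : a ∈ W := (hFW a).mp (Finset.mem_filter.mp hamem).1
    have hat : a < t := (Finset.mem_filter.mp hamem).2
    have hlowle : ∀ w ∈ W, w < t → w ≤ a := fun w hw hwt =>
      lows.le_max' w (hmemlow w hw hwt)
    have hCygt : ∀ s ∈ cellY W t, a < s := fun s hs => hs.1 a haW hat
    have hCybet : ∀ s ∈ cellY W t, ∀ z, a < z → z ≤ s → z ∈ cellY W t := by
      intro s hs z h1 h2
      exact ⟨fun w hw hwt => lt_of_le_of_lt (hlowle w hw hwt) h1,
        fun w hw hwt => lt_of_le_of_lt h2 (hs.2 w hw hwt)⟩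
    have SMya : StrictMonoOn (fun s => Pb.eval s) (insert a (cellY W t)) :=
      strictMonoOn_eval_of_deriv_pos Pb _
        (convex_insert_lb (convex_cellY W t) hCygt (fun s hs z h1 h2 => hCybet s hs z h1 h2))
        (fun v hv => hdposy v (interior_insert_lb hCygt hv))
    have hCxgt : ∀ u ∈ cellX W ψ t, ψ a < u := fun u hu => hu.1 a haW hat
    have hCxbet : ∀ u ∈ cellX W ψ t, ∀ z, ψ a < z → z ≤ u → z ∈ cellX W ψ t := by
      intro u hu z h1 h2
      exact ⟨fun w hw hwt => lt_of_le_of_lt (hψm.le_iff_le.mpr (hlowle w hw hwt)) h1,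
        fun w hw hwt => lt_of_le_of_lt h2 (hu.2 w hw hwt)⟩
    have SMxa : StrictMonoOn (fun u => P.eval u) (insert (ψ a) (cellX W ψ t)) :=
      strictMonoOn_eval_of_deriv_pos P _
        (convex_insert_lb (convex_cellX W ψ t) hCxgt (fun u hu z h1 h2 => hCxbet u hu z h1 h2))
        (fun v hv => hdposx v (interior_insert_lb hCxgt hv))
    have hσa := hH2 a haW
    constructor
    · rintro ⟨cb, hcbY, hcb0⟩
      have hPa : Pb.eval a < 0 := by
        have h := SMya (mem_insert _ _) (mem_insert_of_mem _ hcbY) (hCygt cb hcbY)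
        simpa [hcb0] using h
      have hxa : P.eval (ψ a) < 0 := by
        have := hσa
        rw [sign_neg hPa] at this
        exact (sign_eq_neg_one_iff).mp this
      obtain ⟨v, hv, hv0⟩ := exists_pos_of_strictMonoOn_Ici P hP (ψ t) (SMx.mono (hIciX hhi))
      obtain ⟨r, hr1, hr2, hr0⟩ := hIVT P (ψ a) v (by linarith [hψm hat]) hxa hv0
      refine ⟨r, ⟨fun w hw hwt => lt_of_le_of_lt (hψm.le_iff_le.mpr (hlowle w hw hwt)) hr1,
        fun w hw hwt => ?_⟩, hr0⟩
      exact absurd hwt (hnohi hhi w hw)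
    · intro hnr s hs u hu
      rcases lt_trichotomy (Pb.eval a) 0 with hσ | hσ | hσ
      · -- σ = -1 : impossible
        exfalso
        obtain ⟨v, hv, hv0⟩ := exists_pos_of_strictMonoOn_Ici Pb hPb t (SMy.mono (hIciY hhi))
        obtain ⟨r, hr1, hr2, hr0⟩ := hIVT Pb a v (by linarith) hσ hv0
        refine hnr ⟨r, ⟨fun w hw hwt => lt_of_le_of_lt (hlowle w hw hwt) hr1,
          fun w hw hwt => ?_⟩, hr0⟩
        exact absurd hwt (hnohi hhi w hw)
      · -- σ = 0
        have hy : 0 < Pb.eval s := by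
          have h := SMya (mem_insert _ _) (mem_insert_of_mem _ hs) (hCygt s hs)
          simp only at h
          linarith
        have hxPa : P.eval (ψ a) = 0 := by
          have := hσa
          rw [hσ, sign_zero] at this
          exact sign_eq_zero_iff.mp this
        have hx : 0 < P.eval u := by
          have h := SMxa (mem_insert _ _) (mem_insert_of_mem _ hu) (hCxgt u hu)
          simp only at h
          linarith
        rw [sign_pos hy, sign_pos hx]
      · -- σ = 1
        have hy : 0 < Pb.eval s := by
          have h := SMya (mem_insert _ _) (mem_insert_of_mem _ hs) (hCygt s hs)
          simp only at h
          linarith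
        have hxPa : 0 < P.eval (ψ a) := by
          have := hσa
          rw [sign_pos hσ] at this
          exact (sign_eq_one_iff).mp this
        have hx : 0 < P.eval u := by
          have h := SMxa (mem_insert _ _) (mem_insert_of_mem _ hu) (hCxgt u hu)
          simp only at h
          linarith
        rw [sign_pos hy, sign_pos hx]
  -- CASE 4 : both nonempty
  · set a := lows.max' hlo with hadef
    have hamem := lows.max'_mem hlo
    have haW : a ∈ W := (hFW a).mp (Finset.mem_filter.mp hamem).1
    have hat : a < t := (Finset.mem_filter.mp hamem).2
    have hlowle : ∀ w ∈ W, w < t → w ≤ a := fun w hw hwt =>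
      lows.le_max' w (hmemlow w hw hwt)
    have hCygt : ∀ s ∈ cellY W t, a < s := fun s hs => hs.1 a haW hat
    have hCybet : ∀ s ∈ cellY W t, ∀ z, a < z → z ≤ s → z ∈ cellY W t := by
      intro s hs z h1 h2
      exact ⟨fun w hw hwt => lt_of_le_of_lt (hlowle w hw hwt) h1,
        fun w hw hwt => lt_of_le_of_lt h2 (hs.2 w hw hwt)⟩
    have SMya : StrictMonoOn (fun s => Pb.eval s) (insert a (cellY W t)) :=
      strictMonoOn_eval_of_deriv_pos Pb _
        (convex_insert_lb (convex_cellY W t) hCygt (fun s hs z h1 h2 => hCybet s hs z h1 h2))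
        (fun v hv => hdposy v (interior_insert_lb hCygt hv))
    have hCxgt : ∀ u ∈ cellX W ψ t, ψ a < u := fun u hu => hu.1 a haW hat
    have hCxbet : ∀ u ∈ cellX W ψ t, ∀ z, ψ a < z → z ≤ u → z ∈ cellX W ψ t := by
      intro u hu z h1 h2
      exact ⟨fun w hw hwt => lt_of_le_of_lt (hψm.le_iff_le.mpr (hlowle w hw hwt)) h1,
        fun w hw hwt => lt_of_le_of_lt h2 (hu.2 w hw hwt)⟩
    have SMxa : StrictMonoOn (fun u => P.eval u) (insert (ψ a) (cellX W ψ t)) :=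
      strictMonoOn_eval_of_deriv_pos P _
        (convex_insert_lb (convex_cellX W ψ t) hCxgt (fun u hu z h1 h2 => hCxbet u hu z h1 h2))
        (fun v hv => hdposx v (interior_insert_lb hCxgt hv))
    have hσa := hH2 a haW
    set b := his.min' hhi with hbdef
    have hbmem := his.min'_mem hhi
    have hbW : b ∈ W := (hFW b).mp (Finset.mem_filter.mp hbmem).1
    have hbt : t < b := (Finset.mem_filter.mp hbmem).2
    have hhile : ∀ w ∈ W, t < w → b ≤ w := fun w hw hwt =>
      his.min'_le w (hmemhi w hw hwt)
    have hCylt : ∀ s ∈ cellY W t, s < b := fun s hs => hs.2 b hbW hbt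
    have hCybet' : ∀ s ∈ cellY W t, ∀ z, s ≤ z → z < b → z ∈ cellY W t := by
      intro s hs z h1 h2
      exact ⟨fun w hw hwt => lt_of_lt_of_le (hs.1 w hw hwt) h1,
        fun w hw hwt => lt_of_lt_of_le h2 (hhile w hw hwt)⟩
    have SMyb : StrictMonoOn (fun s => Pb.eval s) (insert b (cellY W t)) :=
      strictMonoOn_eval_of_deriv_pos Pb _
        (convex_insert_ub (convex_cellY W t) hCylt hCybet')
        (fun v hv => hdposy v (interior_insert_ub hCylt hv))
    have hCxlt : ∀ u ∈ cellX W ψ t, u < ψ b := fun u hu => hu.2 b hbW hbt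
    have hCxbet' : ∀ u ∈ cellX W ψ t, ∀ z, u ≤ z → z < ψ b → z ∈ cellX W ψ t := by
      intro u hu z h1 h2
      exact ⟨fun w hw hwt => lt_of_lt_of_le (hu.1 w hw hwt) h1,
        fun w hw hwt => lt_of_lt_of_le h2 (hψm.le_iff_le.mpr (hhile w hw hwt))⟩
    have SMxb : StrictMonoOn (fun u => P.eval u) (insert (ψ b) (cellX W ψ t)) :=
      strictMonoOn_eval_of_deriv_pos P _
        (convex_insert_ub (convex_cellX W ψ t) hCxlt hCxbet')
        (fun v hv => hdposx v (interior_insert_ub hCxlt hv))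
    have hσb := hH2 b hbW
    constructor
    · rintro ⟨cb, hcbY, hcb0⟩
      have hPa : Pb.eval a < 0 := by
        have h := SMya (mem_insert _ _) (mem_insert_of_mem _ hcbY) (hCygt cb hcbY)
        simpa [hcb0] using h
      have hPb : 0 < Pb.eval b := by
        have h := SMyb (mem_insert_of_mem _ hcbY) (mem_insert _ _) (hCylt cb hcbY)
        simpa [hcb0] using h
      have hxa : P.eval (ψ a) < 0 := by
        have := hσa
        rw [sign_neg hPa] at this
        exact (sign_eq_neg_one_iff).mp this
      have hxb : 0 < P.eval (ψ b) := by
        have := hσb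
        rw [sign_pos hPb] at this
        exact (sign_eq_one_iff).mp this
      obtain ⟨r, hr1, hr2, hr0⟩ := hIVT P (ψ a) (ψ b)
        (le_of_lt (hψm (lt_trans hat hbt))) hxa hxb
      refine ⟨r, ⟨fun w hw hwt => lt_of_le_of_lt (hψm.le_iff_le.mpr (hlowle w hw hwt)) hr1,
        fun w hw hwt => lt_of_lt_of_le hr2 (hψm.le_iff_le.mpr (hhile w hw hwt))⟩, hr0⟩
    · intro hnr s hs u hu
      rcases lt_trichotomy (Pb.eval a) 0 with hσ | hσ | hσ
      · -- σ = -1 : show everything negative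
        have hy : Pb.eval s < 0 := by
          by_contra hcon
          push_neg at hcon
          rcases eq_or_lt_of_le hcon with heq | hlt
          · exact hnr ⟨s, hs, heq.symm⟩
          · obtain ⟨r, hr1, hr2, hr0⟩ := hIVT Pb a s (le_of_lt (hCygt s hs)) hσ hlt
            exact hnr ⟨r, hCybet s hs r hr1 (le_of_lt hr2), hr0⟩
        have hxa : P.eval (ψ a) < 0 := by
          have := hσa
          rw [sign_neg hσ] at this
          exact (sign_eq_neg_one_iff).mp this
        have hx : P.eval u < 0 := by
          by_contra hcon
          push_neg at hcon
          -- then P (ψ b) > 0, so Pb b > 0, giving a root of Pb in the cell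
          have hxb : 0 < P.eval (ψ b) := by
            have h := SMxb (mem_insert_of_mem _ hu) (mem_insert _ _) (hCxlt u hu)
            simp only at h
            linarith
          have hPb : 0 < Pb.eval b := by
            have := hσb
            rw [sign_pos hxb] at this
            exact (sign_eq_one_iff).mp this.symm
          obtain ⟨r, hr1, hr2, hr0⟩ := hIVT Pb a b (le_of_lt (lt_trans hat hbt)) hσ hPb
          refine hnr ⟨r, ⟨fun w hw hwt => lt_of_le_of_lt (hlowle w hw hwt) hr1,
            fun w hw hwt => lt_of_lt_of_le hr2 (hhile w hw hwt)⟩, hr0⟩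
        rw [sign_neg hy, sign_neg hx]
      · -- σ = 0
        have hy : 0 < Pb.eval s := by
          have h := SMya (mem_insert _ _) (mem_insert_of_mem _ hs) (hCygt s hs)
          simp only at h
          linarith
        have hxPa : P.eval (ψ a) = 0 := by
          have := hσa
          rw [hσ, sign_zero] at this
          exact sign_eq_zero_iff.mp this
        have hx : 0 < P.eval u := by
          have h := SMxa (mem_insert _ _) (mem_insert_of_mem _ hu) (hCxgt u hu)
          simp only at h
          linarith
        rw [sign_pos hy, sign_pos hx]
      · -- σ = 1
        have hy : 0 < Pb.eval s := by
          have h := SMya (mem_insert _ _) (mem_insert_of_mem _ hs) (hCygt s hs)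
          simp only at h
          linarith
        have hxPa : 0 < P.eval (ψ a) := by
          have := hσa
          rw [sign_pos hσ] at this
          exact (sign_eq_one_iff).mp this
        have hx : 0 < P.eval u := by
          have h := SMxa (mem_insert _ _) (mem_insert_of_mem _ hu) (hCxgt u hu)
          simp only at h
          linarith
        rw [sign_pos hy, sign_pos hx]

end CellAnalysis
section Package

open Polynomial Set

lemma signtype_mul_self {δ : SignType} (h : δ ≠ 0) : δ * δ = 1 := by
  rcases δ with _ | _ | _ <;> simp_all <;> rfl

lemma signtype_coe_ne {δ : SignType} (h : δ ≠ 0) : (δ : ℝ) ≠ 0 := by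
  rcases δ with _ | _ | _ <;> simp_all

lemma sign_coe_mul (δ : SignType) (v : ℝ) :
    SignType.sign ((δ : ℝ) * v) = δ * SignType.sign v := by
  rw [sign_mul]
  rcases δ with _ | _ | _ <;> simp

/-- The combined per-cell analysis for the pair `p`, `pb`, normalized by the sign of the
derivative on the cell. -/
lemma cell_package {W : Set ℝ} (hWfin : W.Finite) {ψ : ℝ → ℝ} (hψm : StrictMono ψ)
    {p pb : Polynomial ℝ} (hp : 0 < p.natDegree) (hpb : 0 < pb.natDegree)
    (hpbroots : ∀ s, (derivative pb).eval s = 0 → s ∈ W)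
    (hproots : ∀ u, (derivative p).eval u = 0 → ∃ w ∈ W, ψ w = u)
    (hdsign : ∀ s, SignType.sign ((derivative p).eval (ψ s)) =
      SignType.sign ((derivative pb).eval s))
    (hH2W : ∀ w ∈ W, SignType.sign (p.eval (ψ w)) = SignType.sign (pb.eval w))
    {t : ℝ} (ht : t ∉ W) :
    ((pb.eval t = 0 → ∃! c, p.eval c = 0 ∧ c ∈ cellX W ψ t) ∧
     (∀ cb ∈ cellY W t, ∀ cb' ∈ cellY W t, pb.eval cb = 0 → pb.eval cb' = 0 → cb = cb')) ∧
    ((¬ ∃ cb ∈ cellY W t, pb.eval cb = 0) → ∀ s ∈ cellY W t, ∀ u ∈ cellX W ψ t,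
        SignType.sign (p.eval u) = SignType.sign (pb.eval s)) ∧
    (∀ c cb, p.eval c = 0 → c ∈ cellX W ψ t → pb.eval cb = 0 → cb ∈ cellY W t →
      ∀ s ∈ cellY W t, ∀ u ∈ cellX W ψ t,
        SignType.sign (s - cb) = SignType.sign (u - c) →
        SignType.sign (p.eval u) = SignType.sign (pb.eval s)) := by
  classical
  have htY : t ∈ cellY W t := mem_cellY_self W t
  have hψtX : ψ t ∈ cellX W ψ t := psi_mem_cellX W hψm t
  have hδ0 : (derivative pb).eval t ≠ 0 := fun h => ht (hpbroots t h)
  set δ := SignType.sign ((derivative pb).eval t) with hδdef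
  have hδne : δ ≠ 0 := fun h => hδ0 (sign_eq_zero_iff.mp h)
  have hδcoe : (δ : ℝ) ≠ 0 := signtype_coe_ne hδne
  set P := Polynomial.C ((δ : ℝ)) * p with hPdef
  set PB := Polynomial.C ((δ : ℝ)) * pb with hPBdef
  have hPdeg : 0 < P.natDegree := by rw [hPdef, natDegree_C_mul hδcoe]; exact hp
  have hPBdeg : 0 < PB.natDegree := by rw [hPBdef, natDegree_C_mul hδcoe]; exact hpb
  have hPeval : ∀ u, P.eval u = (δ : ℝ) * p.eval u := by
    intro u; rw [hPdef, Polynomial.eval_mul, Polynomial.eval_C]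
  have hPBeval : ∀ u, PB.eval u = (δ : ℝ) * pb.eval u := by
    intro u; rw [hPBdef, Polynomial.eval_mul, Polynomial.eval_C]
  have hPsign : ∀ u, SignType.sign (P.eval u) = δ * SignType.sign (p.eval u) := by
    intro u; rw [hPeval, sign_coe_mul]
  have hPBsign : ∀ u, SignType.sign (PB.eval u) = δ * SignType.sign (pb.eval u) := by
    intro u; rw [hPBeval, sign_coe_mul]
  have hP0 : ∀ u, (P.eval u = 0 ↔ p.eval u = 0) := by
    intro u
    rw [hPeval]
    constructor
    · intro h; rcases mul_eq_zero.mp h with h | h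
      · exact absurd h hδcoe
      · exact h
    · intro h; rw [h, mul_zero]
  -- derivative sign positivity on the cells
  have hdy : ∀ s ∈ cellY W t, 0 < (derivative PB).eval s := by
    intro s hs
    have hseg : uIcc s t ⊆ cellY W t :=
      ((convex_iff_ordConnected.mp (convex_cellY W t)).uIcc_subset) hs htY
    have hsgn : SignType.sign ((derivative pb).eval s) = δ := by
      refine sign_eval_eq_of_no_root (derivative pb) ?_
      intro u hu h0
      exact cellY_disjoint_W ht (hseg hu) (hpbroots u h0)
    have : (derivative PB).eval s = (δ : ℝ) * (derivative pb).eval s := by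
      rw [hPBdef, derivative_C_mul, Polynomial.eval_mul, Polynomial.eval_C]
    rw [this]
    have : SignType.sign ((δ : ℝ) * (derivative pb).eval s) = 1 := by
      rw [sign_coe_mul, hsgn, signtype_mul_self hδne]
    exact sign_eq_one_iff.mp this
  have hdx : ∀ u ∈ cellX W ψ t, 0 < (derivative P).eval u := by
    intro u hu
    have hseg : uIcc u (ψ t) ⊆ cellX W ψ t :=
      ((convex_iff_ordConnected.mp (convex_cellX W ψ t)).uIcc_subset) hu hψtX
    have hsgn : SignType.sign ((derivative p).eval u) = δ := by
      have h1 : SignType.sign ((derivative p).eval u) =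
          SignType.sign ((derivative p).eval (ψ t)) := by
        refine sign_eval_eq_of_no_root (derivative p) ?_
        intro v hv h0
        obtain ⟨w, hw, rfl⟩ := hproots v h0
        exact cellX_ne_psi_W ht (hseg hv) w hw rfl
      rw [h1, hdsign t]
    have : (derivative P).eval u = (δ : ℝ) * (derivative p).eval u := by
      rw [hPdef, derivative_C_mul, Polynomial.eval_mul, Polynomial.eval_C]
    rw [this]
    have : SignType.sign ((δ : ℝ) * (derivative p).eval u) = 1 := by
      rw [sign_coe_mul, hsgn, signtype_mul_self hδne]
    exact sign_eq_one_iff.mp this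
  have SMy : StrictMonoOn (fun s => PB.eval s) (cellY W t) :=
    strictMonoOn_eval_of_deriv_pos PB _ (convex_cellY W t)
      (fun v hv => hdy v (interior_subset hv))
  have SMx : StrictMonoOn (fun u => P.eval u) (cellX W ψ t) :=
    strictMonoOn_eval_of_deriv_pos P _ (convex_cellX W ψ t)
      (fun v hv => hdx v (interior_subset hv))
  have hH2' : ∀ w ∈ W, SignType.sign (P.eval (ψ w)) = SignType.sign (PB.eval w) := by
    intro w hw
    rw [hPsign, hPBsign, hH2W w hw]
  have hmain := cell_main hWfin hψm hPdeg hPBdeg ht hdy hdx hH2'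
  have hsigneq : ∀ u s, SignType.sign (P.eval u) = SignType.sign (PB.eval s) →
      SignType.sign (p.eval u) = SignType.sign (pb.eval s) := by
    intro u s h
    rw [hPsign, hPBsign] at h
    calc SignType.sign (p.eval u) = 1 * SignType.sign (p.eval u) := by rw [one_mul]
      _ = (δ * δ) * SignType.sign (p.eval u) := by rw [signtype_mul_self hδne]
      _ = δ * (δ * SignType.sign (p.eval u)) := by rw [mul_assoc]
      _ = δ * (δ * SignType.sign (pb.eval s)) := by rw [h]
      _ = (δ * δ) * SignType.sign (pb.eval s) := by rw [mul_assoc]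
      _ = SignType.sign (pb.eval s) := by rw [signtype_mul_self hδne, one_mul]
  refine ⟨⟨?_, ?_⟩, ?_, ?_⟩
  · -- existence and uniqueness of the transferred root
    intro ht0
    have hPB0 : PB.eval t = 0 := by rw [hPBeval, ht0, mul_zero]
    obtain ⟨c, hcX, hc0⟩ := hmain.1 ⟨t, htY, hPB0⟩
    refine ⟨c, ⟨(hP0 c).mp hc0, hcX⟩, ?_⟩
    rintro c' ⟨hc'0, hc'X⟩
    have h1 : P.eval c' = 0 := (hP0 c').mpr hc'0
    exact SMx.injOn hc'X hcX (by rw [h1, hc0])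
  · -- uniqueness of roots of pb in the cell
    intro cb hcb cb' hcb' h0 h0'
    have h1 : PB.eval cb = 0 := by rw [hPBeval, h0, mul_zero]
    have h2 : PB.eval cb' = 0 := by rw [hPBeval, h0', mul_zero]
    exact SMy.injOn hcb hcb' (by rw [h1, h2])
  · -- no-root case
    intro hnr s hs u hu
    have hnr' : ¬ ∃ cb ∈ cellY W t, PB.eval cb = 0 := by
      rintro ⟨cb, hcb, h0⟩
      apply hnr
      refine ⟨cb, hcb, ?_⟩
      rw [hPBeval] at h0
      rcases mul_eq_zero.mp h0 with h | h
      · exact absurd h hδcoe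
      · exact h
    exact hsigneq u s (hmain.2 hnr' s hs u hu)
  · -- root case
    intro c cb hc0 hcX hcb0 hcbY s hs u hu hss
    have h1 : P.eval c = 0 := (hP0 c).mpr hc0
    have h2 : PB.eval cb = 0 := by rw [hPBeval, hcb0, mul_zero]
    exact hsigneq u s (cell_root_sign SMy SMx h1 hcX h2 hcbY hs hu hss)

end Package
section Core

open Polynomial Set

lemma cellY_shift {W : Set ℝ} {t cb : ℝ} (ht : t ∉ W) (hcb : cb ∈ cellY W t) :
    (∀ w ∈ W, (w < cb ↔ w < t)) ∧ (∀ w ∈ W, (cb < w ↔ t < w)) := by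
  have hcbW : cb ∉ W := cellY_disjoint_W ht hcb
  constructor
  · intro w hw
    constructor
    · intro h
      by_contra h'
      push_neg at h'
      have h2 : t < w := lt_of_le_of_ne h' (fun he => ht (he ▸ hw))
      exact absurd (hcb.2 w hw h2) (not_lt.mpr h.le)
    · intro h
      exact hcb.1 w hw h
  · intro w hw
    constructor
    · intro h
      by_contra h'
      push_neg at h'
      have h2 : w < t := lt_of_le_of_ne h' (fun he => ht (he ▸ hw))
      exact absurd (hcb.1 w hw h2) (not_lt.mpr h.le)
    · intro h
      exact hcb.2 w hw h

lemma cellX_congr {W : Set ℝ} {ψ : ℝ → ℝ} {t cb : ℝ} (ht : t ∉ W) (hcb : cb ∈ cellY W t) :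
    cellX W ψ cb = cellX W ψ t := by
  obtain ⟨h1, h2⟩ := cellY_shift ht hcb
  ext u
  exact ⟨fun hu => ⟨fun w hw hwt => hu.1 w hw ((h1 w hw).mpr hwt),
      fun w hw hwt => hu.2 w hw ((h2 w hw).mpr hwt)⟩,
    fun hu => ⟨fun w hw hwt => hu.1 w hw ((h1 w hw).mp hwt),
      fun w hw hwt => hu.2 w hw ((h2 w hw).mp hwt)⟩⟩

lemma cellY_congr {W : Set ℝ} {t cb : ℝ} (ht : t ∉ W) (hcb : cb ∈ cellY W t) :
    cellY W cb = cellY W t := by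
  obtain ⟨h1, h2⟩ := cellY_shift ht hcb
  ext s
  exact ⟨fun hs => ⟨fun w hw hwt => hs.1 w hw ((h1 w hw).mpr hwt),
      fun w hw hwt => hs.2 w hw ((h2 w hw).mpr hwt)⟩,
    fun hs => ⟨fun w hw hwt => hs.1 w hw ((h1 w hw).mp hwt),
      fun w hw hwt => hs.2 w hw ((h2 w hw).mp hwt)⟩⟩

/-- The core transfer lemma: given a sign-matching monotone surjection for the derived
family `F` (which contains the pair of derivatives), and sign transfer for `p` at the
`W`-points, produce a sign-matching monotone surjection for `p` itself (and `F`). -/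
lemma core (p pb : Polynomial ℝ) (F : List (Polynomial ℝ × Polynomial ℝ))
    (hp : 0 < p.natDegree) (hpb : 0 < pb.natDegree)
    (hdF : (derivative p, derivative pb) ∈ F)
    (ψ : ℝ → ℝ) (hψm : StrictMono ψ) (hψs : Function.Surjective ψ)
    (hψ : ∀ qq ∈ F, ∀ t, SignType.sign (qq.1.eval (ψ t)) = SignType.sign (qq.2.eval t))
    (hH2 : ∀ w, (∃ qq ∈ F, qq.2 ≠ 0 ∧ qq.2.eval w = 0) →
      SignType.sign (p.eval (ψ w)) = SignType.sign (pb.eval w)) :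
    ∃ φ : ℝ → ℝ, StrictMono φ ∧ Function.Surjective φ ∧
      (∀ t, SignType.sign (p.eval (φ t)) = SignType.sign (pb.eval t)) ∧
      (∀ qq ∈ F, ∀ t, SignType.sign (qq.1.eval (φ t)) = SignType.sign (qq.2.eval t)) := by
  classical
  -- zero-pair equivalence
  have hz : ∀ qq ∈ F, (qq.1 = 0 ↔ qq.2 = 0) := by
    intro qq hq
    constructor
    · intro h1
      apply Polynomial.funext
      intro r
      have h := hψ qq hq r
      rw [h1, Polynomial.eval_zero, sign_zero] at h
      rw [Polynomial.eval_zero]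
      exact sign_eq_zero_iff.mp h.symm
    · intro h2
      apply Polynomial.funext
      intro r
      obtain ⟨v, rfl⟩ := hψs r
      have h := hψ qq hq v
      rw [h2, Polynomial.eval_zero, sign_zero] at h
      rw [Polynomial.eval_zero]
      exact sign_eq_zero_iff.mp h
  have hroot_iff : ∀ qq ∈ F, ∀ v, (qq.1.eval (ψ v) = 0 ↔ qq.2.eval v = 0) := by
    intro qq hq v
    have h := hψ qq hq v
    constructor
    · intro h0
      rw [h0, sign_zero] at h
      exact sign_eq_zero_iff.mp h.symm
    · intro h0
      rw [h0, sign_zero] at h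
      exact sign_eq_zero_iff.mp h
  set W : Set ℝ := {w | ∃ qq ∈ F, qq.2 ≠ 0 ∧ qq.2.eval w = 0} with hWdef
  have hWfin : W.Finite := by
    have hsub : W ⊆ ⋃ qq ∈ F.toFinset, {w : ℝ | qq.2 ≠ 0 ∧ qq.2.eval w = 0} := by
      rintro w ⟨qq, hq, h1, h2⟩
      exact mem_iUnion₂.mpr ⟨qq, List.mem_toFinset.mpr hq, h1, h2⟩
    refine Set.Finite.subset (Set.Finite.biUnion F.toFinset.finite_toSet fun qq _ => ?_) hsub
    by_cases h : qq.2 = 0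
    · have : {w : ℝ | qq.2 ≠ 0 ∧ qq.2.eval w = 0} = ∅ := by
        ext w; simp [h]
      rw [this]; exact finite_empty
    · refine Set.Finite.subset (qq.2.roots.toFinset : Finset ℝ).finite_toSet ?_
      rintro w ⟨h1, h2⟩
      simp only [Finset.coe_sort_coe, Multiset.mem_toFinset, Finset.mem_coe]
      rw [Polynomial.mem_roots h]
      exact h2
  -- derivative facts
  have hdsign : ∀ s, SignType.sign ((derivative p).eval (ψ s)) =
      SignType.sign ((derivative pb).eval s) := fun s => hψ _ hdF s
  have hpb' : derivative pb ≠ 0 := by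
    intro h
    have := natDegree_eq_zero_of_derivative_eq_zero h
    omega
  have hpbroots : ∀ s, (derivative pb).eval s = 0 → s ∈ W :=
    fun s h => ⟨_, hdF, hpb', h⟩
  have hproots : ∀ u, (derivative p).eval u = 0 → ∃ w ∈ W, ψ w = u := by
    intro u h
    obtain ⟨v, rfl⟩ := hψs u
    have hv : (derivative pb).eval v = 0 := (hroot_iff _ hdF v).mp h
    exact ⟨v, hpbroots v hv, rfl⟩
  have hH2W : ∀ w ∈ W, SignType.sign (p.eval (ψ w)) = SignType.sign (pb.eval w) :=
    fun w hw => hH2 w hw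
  -- the package, available at any t ∉ W
  have hpkg := fun (t : ℝ) (ht : t ∉ W) =>
    cell_package hWfin hψm hp hpb hpbroots hproots hdsign hH2W ht
  -- pb is nonzero, so its root set is finite
  have hpb0 : pb ≠ 0 := fun h => by rw [h, natDegree_zero] at hpb; omega
  have hRfin : {w : ℝ | pb.eval w = 0}.Finite := by
    refine Set.Finite.subset (pb.roots.toFinset : Finset ℝ).finite_toSet ?_
    intro w hw
    simp only [Finset.coe_sort_coe, Multiset.mem_toFinset, Finset.mem_coe]
    rw [Polynomial.mem_roots hpb0]
    exact hw
  have hXfin : (W ∪ {w : ℝ | pb.eval w = 0}).Finite := hWfin.union hRfin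
  set Xf : Finset ℝ := hXfin.toFinset with hXfdef
  have hXf : ∀ w, w ∈ Xf ↔ w ∈ W ∨ pb.eval w = 0 := by
    intro w
    rw [hXfdef, Set.Finite.mem_toFinset]
    rfl
  -- definition of β
  set β : ℝ → ℝ := fun w =>
    if h : pb.eval w = 0 ∧ w ∉ W then ((hpkg w h.2).1.1 h.1).exists.choose else ψ w
    with hβdef
  have hβW : ∀ w ∈ W, β w = ψ w := by
    intro w hw
    rw [hβdef]
    simp only
    rw [dif_neg (by tauto)]
  have hβroot : ∀ w, pb.eval w = 0 → w ∉ W →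
      p.eval (β w) = 0 ∧ β w ∈ cellX W ψ w := by
    intro w h0 hw
    rw [hβdef]
    simp only
    rw [dif_pos ⟨h0, hw⟩]
    exact ((hpkg w hw).1.1 h0).exists.choose_spec
  -- strict monotonicity of β on Xf
  have hβmono : StrictMonoOn β ↑Xf := by
    intro w₁ hw₁ w₂ hw₂ hlt
    simp only [Finset.mem_coe] at hw₁ hw₂
    rw [hXf] at hw₁ hw₂
    by_cases h1 : w₁ ∈ W <;> by_cases h2 : w₂ ∈ W
    · rw [hβW w₁ h1, hβW w₂ h2]; exact hψm hlt
    · have h20 : pb.eval w₂ = 0 := by tauto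
      obtain ⟨hc0, hcX⟩ := hβroot w₂ h20 h2
      rw [hβW w₁ h1]
      exact hcX.1 w₁ h1 hlt
    · have h10 : pb.eval w₁ = 0 := by tauto
      obtain ⟨hc0, hcX⟩ := hβroot w₁ h10 h1
      rw [hβW w₂ h2]
      exact hcX.2 w₂ h2 hlt
    · have h10 : pb.eval w₁ = 0 := by tauto
      have h20 : pb.eval w₂ = 0 := by tauto
      obtain ⟨hc10, hc1X⟩ := hβroot w₁ h10 h1
      obtain ⟨hc20, hc2X⟩ := hβroot w₂ h20 h2
      by_cases hcell : w₂ ∈ cellY W w₁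
      · exfalso
        have := ((hpkg w₁ h1).1.2) w₁ (mem_cellY_self W w₁) w₂ hcell h10 h20
        exact (ne_of_lt hlt) this
      · -- find a separating W point
        have hA : ∀ w ∈ W, w < w₁ → w < w₂ := fun w _ h' => h'.trans hlt
        have hB : ¬(∀ w ∈ W, w₁ < w → w₂ < w) := fun hB => hcell ⟨hA, hB⟩
        push_neg at hB
        obtain ⟨w, hw, hw1, hw2⟩ := hB
        have hww2 : w < w₂ := lt_of_le_of_ne hw2 (fun he => h2 (he ▸ hw))
        calc β w₁ < ψ w := hc1X.2 w hw hw1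
          _ < β w₂ := hc2X.1 w hw hww2
  obtain ⟨φ, hφm, hφs, hφe⟩ := pwExtend hβmono
  have hφW : ∀ w ∈ W, φ w = ψ w := by
    intro w hw
    rw [hφe w ((hXf w).mpr (Or.inl hw)), hβW w hw]
  -- key cell-position fact for t ∉ W
  have hkey : ∀ t, t ∉ W → φ t ∈ cellX W ψ t := by
    intro t ht
    constructor
    · intro w hw hwt
      rw [← hφW w hw]
      exact hφm hwt
    · intro w hw hwt
      rw [← hφW w hw]
      exact hφm hwt
  -- q-part
  have hqpart : ∀ qq ∈ F, ∀ t, SignType.sign (qq.1.eval (φ t)) =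
      SignType.sign (qq.2.eval t) := by
    intro qq hq t
    by_cases htW : t ∈ W
    · rw [hφW t htW]
      exact hψ qq hq t
    · by_cases hq0 : qq.1 = 0
      · have hq20 : qq.2 = 0 := (hz qq hq).mp hq0
        rw [hq0, hq20, Polynomial.eval_zero, Polynomial.eval_zero]
      · have h1 : SignType.sign (qq.1.eval (φ t)) = SignType.sign (qq.1.eval (ψ t)) := by
          refine sign_eval_eq_of_no_root qq.1 ?_
          intro u hu h0
          have huX : u ∈ cellX W ψ t :=
            ((convex_iff_ordConnected.mp (convex_cellX W ψ t)).uIcc_subset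
              (hkey t htW) (psi_mem_cellX W hψm t)) hu
          obtain ⟨v, rfl⟩ := hψs u
          have hv0 : qq.2.eval v = 0 := (hroot_iff qq hq v).mp h0
          have hq20 : qq.2 ≠ 0 := fun h => hq0 ((hz qq hq).mpr h)
          exact cellX_ne_psi_W htW huX v ⟨qq, hq, hq20, hv0⟩ rfl
        rw [h1]
        exact hψ qq hq t
  -- p-part
  have hppart : ∀ t, SignType.sign (p.eval (φ t)) = SignType.sign (pb.eval t) := by
    intro t
    by_cases htW : t ∈ W
    · rw [hφW t htW]
      exact hH2 t htW
    · by_cases ht0 : pb.eval t = 0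
      · have htXf : t ∈ Xf := (hXf t).mpr (Or.inr ht0)
        rw [hφe t htXf]
        obtain ⟨hc0, _⟩ := hβroot t ht0 htW
        rw [hc0, ht0]
      · by_cases hroot : ∃ cb ∈ cellY W t, pb.eval cb = 0
        · obtain ⟨cb, hcbY, hcb0⟩ := hroot
          have hcbW : cb ∉ W := cellY_disjoint_W htW hcbY
          obtain ⟨hc0, hcX⟩ := hβroot cb hcb0 hcbW
          have hcX' : β cb ∈ cellX W ψ t := by
            rw [← cellX_congr htW hcbY]
            exact hcX
          have hβφ : β cb = φ cb := (hφe cb ((hXf cb).mpr (Or.inr hcb0))).symm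
          have hss : SignType.sign (t - cb) = SignType.sign (φ t - β cb) := by
            rcases lt_trichotomy t cb with h | h | h
            · rw [sign_neg (by linarith), sign_neg (by
                have := hφm h
                rw [← hβφ] at this
                linarith)]
            · exact absurd (h ▸ hcb0) ht0
            · rw [sign_pos (by linarith), sign_pos (by
                have := hφm h
                rw [← hβφ] at this
                linarith)]
          exact (hpkg t htW).2.2 (β cb) cb hc0 hcX' hcb0 hcbY t (mem_cellY_self W t)
            (φ t) (hkey t htW) hss
        · exact (hpkg t htW).2.1 hroot t (mem_cellY_self W t) (φ t) (hkey t htW)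
  exact ⟨φ, hφm, hφs, hppart, hqpart⟩

end Core
section MainDefs

open Polynomial

variable {n : ℕ}

/-- Abbreviation: polynomials in one variable over `ℝ[x₁,…,xₙ]`. -/
abbrev PR (n : ℕ) := Polynomial (MvPolynomial (Fin n) ℝ)

/-- Specialize the coefficients at the point `x`. -/
noncomputable def mapx (x : Fin n → ℝ) : PR n → Polynomial ℝ :=
  Polynomial.map (MvPolynomial.eval x)

/-- `G` is a family of polynomials in `x` whose signs determine the one-variable sign
behaviour of the family `P` over the point `x`, up to a monotone surjective
reparametrization. -/
def SignDet (P : Multiset (PR n)) (G : List (MvPolynomial (Fin n) ℝ)) : Prop :=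
  ∀ x y : Fin n → ℝ,
    (∀ g ∈ G, SignType.sign (MvPolynomial.eval x g) = SignType.sign (MvPolynomial.eval y g)) →
    ∃ φ : ℝ → ℝ, StrictMono φ ∧ Function.Surjective φ ∧
      ∀ q ∈ P, ∀ t : ℝ,
        SignType.sign ((mapx x q).eval (φ t)) = SignType.sign ((mapx y q).eval t)

lemma signDet_const (P : Multiset (PR n)) (h : ∀ q ∈ P, q.natDegree = 0) :
    ∃ G, SignDet P G := by
  refine ⟨P.toList.map (fun q => q.coeff 0), ?_⟩
  intro x y hsig
  refine ⟨id, strictMono_id, Function.surjective_id, ?_⟩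
  intro q hq t
  have hq0 : q = Polynomial.C (q.coeff 0) := eq_C_of_natDegree_eq_zero (h q hq)
  have hg := hsig _ (List.mem_map.mpr ⟨q, (Multiset.mem_toList).mpr hq, rfl⟩)
  rw [hq0]
  simp only [mapx, Polynomial.map_C, Polynomial.eval_C, id]
  exact hg

lemma multiset_exists_max {α : Type*} (f : α → ℕ) (P : Multiset α) (h : P ≠ 0) :
    ∃ p ∈ P, ∀ q ∈ P, f q ≤ f p := by
  induction P using Multiset.induction_on with
  | empty => simp at h
  | cons a s ih =>
    rcases eq_or_ne s 0 with rfl | hs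
    · exact ⟨a, by simp, by simp⟩
    · obtain ⟨p, hp, hmax⟩ := ih hs
      by_cases hc : f a ≤ f p
      · refine ⟨p, Multiset.mem_cons_of_mem hp, ?_⟩
        intro q hq
        rcases Multiset.mem_cons.mp hq with rfl | hq
        · exact hc
        · exact hmax q hq
      · push_neg at hc
        refine ⟨a, Multiset.mem_cons_self a s, ?_⟩
        intro q hq
        rcases Multiset.mem_cons.mp hq with rfl | hq
        · exact le_rfl
        · exact (hmax q hq).trans hc.le

open scoped Classical in
/-- The number of members of `P` of exact degree `d` (not counting the zero polynomial). -/
noncomputable def degcnt (d : ℕ) (P : Multiset (PR n)) : ℕ :=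
  Multiset.card (P.filter (fun q => q.natDegree = d ∧ q ≠ 0))

/-- Weight of a polynomial: `0` for the zero polynomial, `natDegree + 1` otherwise. -/
noncomputable def wt (q : PR n) : ℕ := if q = 0 then 0 else q.natDegree + 1

noncomputable def weight (P : Multiset (PR n)) : ℕ := (P.map wt).sum

open scoped Classical in
lemma degcnt_cons_of_pos {d : ℕ} {q : PR n} (P : Multiset (PR n))
    (h : q.natDegree = d ∧ q ≠ 0) : degcnt d (q ::ₘ P) = degcnt d P + 1 := by
  rw [degcnt, degcnt,
    Multiset.filter_cons_of_pos (p := fun q : PR n => q.natDegree = d ∧ q ≠ 0) P h,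
    Multiset.card_cons]

open scoped Classical in
lemma degcnt_cons_of_neg {d : ℕ} {q : PR n} (P : Multiset (PR n))
    (h : ¬(q.natDegree = d ∧ q ≠ 0)) : degcnt d (q ::ₘ P) = degcnt d P := by
  rw [degcnt, degcnt,
    Multiset.filter_cons_of_neg (p := fun q : PR n => q.natDegree = d ∧ q ≠ 0) P h]

open scoped Classical in
lemma degcnt_add (d : ℕ) (P P' : Multiset (PR n)) :
    degcnt d (P + P') = degcnt d P + degcnt d P' := by
  rw [degcnt, degcnt, degcnt, Multiset.filter_add, Multiset.card_add]

open scoped Classical in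
lemma degcnt_eq_zero {d : ℕ} {P : Multiset (PR n)}
    (h : ∀ q ∈ P, ¬(q.natDegree = d ∧ q ≠ 0)) : degcnt d P = 0 := by
  rw [degcnt, Multiset.filter_eq_nil.mpr h, Multiset.card_zero]

open scoped Classical in
lemma degcnt_le_of_le {d : ℕ} {P P' : Multiset (PR n)} (h : P ≤ P') :
    degcnt d P ≤ degcnt d P' :=
  Multiset.card_le_card (Multiset.filter_le_filter _ h)

lemma weight_cons (q : PR n) (P : Multiset (PR n)) :
    weight (q ::ₘ P) = wt q + weight P := by
  rw [weight, Multiset.map_cons, Multiset.sum_cons, weight]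

lemma mapx_eraseLead {x : Fin n → ℝ} {q : PR n}
    (h : MvPolynomial.eval x q.leadingCoeff = 0) : mapx x q = mapx x q.eraseLead := by
  have h1 := eraseLead_add_monomial_natDegree_leadingCoeff q
  have h2 : mapx x (q.eraseLead + Polynomial.monomial q.natDegree q.leadingCoeff) =
      mapx x q := by rw [h1]
  rw [← h2, mapx, Polynomial.map_add, Polynomial.map_monomial, h, Polynomial.monomial_zero_right,
    add_zero]

lemma eraseLead_of_natDegree_zero {q : PR n} (h : q.natDegree = 0) : q.eraseLead = 0 := by
  have h1 := eq_C_of_natDegree_eq_zero h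
  rw [h1]
  exact Polynomial.eraseLead_C _

lemma derivative_facts {q : PR n} (hq : 1 ≤ q.natDegree) :
    (derivative q).natDegree = q.natDegree - 1 ∧
      (derivative q).leadingCoeff = (q.natDegree : MvPolynomial (Fin n) ℝ) * q.leadingCoeff := by
  have hq0 : q ≠ 0 := fun h => by rw [h, natDegree_zero] at hq; omega
  have hlc : q.leadingCoeff ≠ 0 := leadingCoeff_ne_zero.mpr hq0
  have hcast : (q.natDegree : MvPolynomial (Fin n) ℝ) ≠ 0 := by
    intro hcc
    have h5 := congrArg (MvPolynomial.eval (fun _ : Fin n => (0:ℝ))) hcc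
    simp only [map_natCast, map_zero] at h5
    have : (q.natDegree : ℝ) ≠ 0 := Nat.cast_ne_zero.mpr (by omega)
    exact this h5
  have hcoeff : (derivative q).coeff (q.natDegree - 1) =
      (q.natDegree : MvPolynomial (Fin n) ℝ) * q.leadingCoeff := by
    rw [coeff_derivative]
    have h3 : q.natDegree - 1 + 1 = q.natDegree := by omega
    rw [h3, Polynomial.coeff_natDegree]
    have h4 : ((q.natDegree - 1 : ℕ) : MvPolynomial (Fin n) ℝ) + 1 =
        (q.natDegree : MvPolynomial (Fin n) ℝ) := by
      rw [← Nat.cast_add_one, h3]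
    rw [h4]
    ring
  have hne : (derivative q).coeff (q.natDegree - 1) ≠ 0 := by
    rw [hcoeff]
    exact mul_ne_zero hcast hlc
  have hle : (derivative q).natDegree ≤ q.natDegree - 1 := by
    have := natDegree_derivative_lt (p := q) (by omega)
    omega
  have hge : q.natDegree - 1 ≤ (derivative q).natDegree := le_natDegree_of_ne_zero hne
  have hdeg : (derivative q).natDegree = q.natDegree - 1 := le_antisymm hle hge
  refine ⟨hdeg, ?_⟩
  rw [Polynomial.leadingCoeff, hdeg, hcoeff]

end MainDefs
section MainInduction

open Polynomial

variable {n : ℕ}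

lemma sign_cancel_pow {s : SignType} (hs : s ≠ 0) (kk : ℕ) {a b : SignType}
    (h : s ^ kk * a = s ^ kk * b) : a = b := by
  have h1 : s ^ kk * (s ^ kk * a) = s ^ kk * (s ^ kk * b) := by rw [h]
  rwa [← mul_assoc, ← mul_assoc, ← mul_pow, signtype_mul_self hs, one_pow, one_mul, one_mul] at h1

theorem signDet_aux : ∀ d k c : ℕ, ∀ P : Multiset (PR n),
    (∀ q ∈ P, q.natDegree ≤ d) → degcnt d P ≤ k → weight P ≤ c → ∃ G, SignDet P G := by
  intro d
  induction d using Nat.strong_induction_on with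
  | _ d ihd =>
  intro k
  induction k with
  | zero =>
    intro c P hdeg hcnt _
    by_cases hd0 : d = 0
    · subst hd0
      exact signDet_const P (fun q hq => Nat.le_zero.mp (hdeg q hq))
    · have hfil : ∀ q ∈ P, ¬(q.natDegree = d ∧ q ≠ 0) := by
        classical
        have h0 : degcnt d P = 0 := Nat.le_zero.mp hcnt
        rw [degcnt, Multiset.card_eq_zero] at h0
        exact Multiset.filter_eq_nil.mp h0
      have hdeg' : ∀ q ∈ P, q.natDegree ≤ d - 1 := by
        intro q hq
        by_cases hq0 : q = 0
        · rw [hq0, natDegree_zero]; omega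
        · have h1 := hdeg q hq
          have h2 := hfil q hq
          have : q.natDegree ≠ d := fun h => h2 ⟨h, hq0⟩
          omega
      exact ihd (d - 1) (by omega) (degcnt (d - 1) P) (weight P) P hdeg' le_rfl le_rfl
  | succ k ihk =>
  intro c
  induction c using Nat.strong_induction_on with
  | _ c ihc =>
  intro P hdeg hcnt hw
  classical
  by_cases hbase : ∀ q ∈ P, q.natDegree = 0
  · exact signDet_const P hbase
  · push_neg at hbase
    obtain ⟨q₀, hq₀P, hq₀d⟩ := hbase
    have hP0 : P ≠ 0 := fun h => by rw [h] at hq₀P; simp at hq₀P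
    obtain ⟨p, hpP, hpmax⟩ := multiset_exists_max Polynomial.natDegree P hP0
    have hD1 : 1 ≤ p.natDegree := le_trans (by omega) (hpmax q₀ hq₀P)
    by_cases hDd : p.natDegree < d
    · exact ihd p.natDegree hDd (degcnt p.natDegree P) (weight P) P
        (fun q hq => hpmax q hq) le_rfl le_rfl
    · have hDd' : p.natDegree = d := le_antisymm (hdeg p hpP) (not_lt.mp hDd)
      have hd1 : 1 ≤ d := hDd' ▸ hD1
      have hp0 : p ≠ 0 := fun h => by rw [h, natDegree_zero] at hD1; omega
      set Q := P.erase p with hQdef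
      have hPQ : P = p ::ₘ Q := (Multiset.cons_erase hpP).symm
      have hQle : Q ≤ P := Multiset.erase_le p P
      set F0 : Multiset (PR n) := derivative p ::ₘ Q with hF0def
      set P' : Multiset (PR n) := F0 + F0.map (fun q => prem p q) with hP'def
      have hF0P' : ∀ q ∈ F0, q ∈ P' := fun q hq => Multiset.mem_add.mpr (Or.inl hq)
      have hpremP' : ∀ q ∈ F0, prem p q ∈ P' :=
        fun q hq => Multiset.mem_add.mpr (Or.inr (Multiset.mem_map_of_mem _ hq))
      have hF0deg : ∀ q ∈ F0, q.natDegree ≤ d := by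
        intro q hq
        rcases Multiset.mem_cons.mp hq with rfl | hq
        · have := natDegree_derivative_lt (p := p) (by omega)
          omega
        · exact hdeg q (Multiset.mem_of_le hQle hq)
      have hdeg' : ∀ q ∈ P', q.natDegree ≤ d := by
        intro q hq
        rcases Multiset.mem_add.mp hq with hq | hq
        · exact hF0deg q hq
        · obtain ⟨r, hr, rfl⟩ := Multiset.mem_map.mp hq
          have h1 := prem_natDegree_le p r
          have h2 := hF0deg r hr
          omega
      have hcntQ : degcnt d Q ≤ k := by
        have h1 : degcnt d P = degcnt d Q + 1 := by
          rw [hPQ]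
          exact degcnt_cons_of_pos Q ⟨hDd', hp0⟩
        omega
      have hcnt' : degcnt d P' ≤ k := by
        rw [hP'def, degcnt_add]
        have h1 : degcnt d F0 = degcnt d Q := by
          refine degcnt_cons_of_neg Q ?_
          rintro ⟨h, -⟩
          have := natDegree_derivative_lt (p := p) (by omega)
          omega
        have h2 : degcnt d (F0.map (fun q => prem p q)) = 0 := by
          refine degcnt_eq_zero ?_
          intro r hr
          obtain ⟨q, hq, rfl⟩ := Multiset.mem_map.mp hr
          rintro ⟨h, -⟩
          have h3 := prem_natDegree_le p q
          have h4 := hF0deg q hq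
          omega
        omega
      obtain ⟨G', hG'⟩ := ihk (weight P') P' hdeg' hcnt' le_rfl
      -- eraseLead recursive calls
      have hera : ∀ r ∈ P, r ≠ 0 → ∃ G₀, SignDet (r.eraseLead ::ₘ P.erase r) G₀ := by
        intro r hrP hrne
        have hers : r.eraseLead.natDegree ≤ r.natDegree - 1 := eraseLead_natDegree_le r
        have hdeg₀ : ∀ q ∈ r.eraseLead ::ₘ P.erase r, q.natDegree ≤ d := by
          intro q hq
          rcases Multiset.mem_cons.mp hq with rfl | hq
          · have := hdeg r hrP; omega
          · exact hdeg q (Multiset.mem_of_le (Multiset.erase_le r P) hq)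
        have herasnot : ¬(r.eraseLead.natDegree = d ∧ r.eraseLead ≠ 0) := by
          rintro ⟨h, -⟩
          have := hdeg r hrP
          omega
        by_cases hrd : r.natDegree = d
        · have hcnt₀ : degcnt d (r.eraseLead ::ₘ P.erase r) ≤ k := by
            have h1 : degcnt d P = degcnt d (P.erase r) + 1 := by
              conv_lhs => rw [(Multiset.cons_erase hrP).symm]
              exact degcnt_cons_of_pos _ ⟨hrd, hrne⟩
            have h2 : degcnt d (r.eraseLead ::ₘ P.erase r) = degcnt d (P.erase r) :=
              degcnt_cons_of_neg _ herasnot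
            omega
          exact ihk (weight (r.eraseLead ::ₘ P.erase r)) _ hdeg₀ hcnt₀ le_rfl
        · have hwlt : weight (r.eraseLead ::ₘ P.erase r) < weight P := by
            have h1 : weight P = wt r + weight (P.erase r) := by
              conv_lhs => rw [(Multiset.cons_erase hrP).symm]
              exact weight_cons _ _
            have h2 : weight (r.eraseLead ::ₘ P.erase r) = wt r.eraseLead + weight (P.erase r) :=
              weight_cons _ _
            have h3 : wt r.eraseLead < wt r := by
              rw [wt, wt, if_neg hrne]
              by_cases he : r.eraseLead = 0
              · rw [if_pos he]; omega
              · rw [if_neg he]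
                have h4 : r.natDegree ≠ 0 := by
                  intro h5
                  exact he (eraseLead_of_natDegree_zero h5)
                omega
            omega
          have hcnt₀ : degcnt d (r.eraseLead ::ₘ P.erase r) ≤ k + 1 := by
            have h2 : degcnt d (r.eraseLead ::ₘ P.erase r) = degcnt d (P.erase r) :=
              degcnt_cons_of_neg _ herasnot
            have h3 : degcnt d (P.erase r) ≤ degcnt d P := degcnt_le_of_le (Multiset.erase_le r P)
            omega
          exact ihc (weight (r.eraseLead ::ₘ P.erase r)) (by omega) _ hdeg₀ hcnt₀ le_rfl
      choose! Gf hGf using hera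
      refine ⟨(P.toList.map Polynomial.leadingCoeff) ++
        ((derivative p).leadingCoeff :: G') ++ (P.toList.map Gf).flatten, ?_⟩
      intro x y hsig
      have hsiglc : ∀ q ∈ P, SignType.sign (MvPolynomial.eval x q.leadingCoeff) =
          SignType.sign (MvPolynomial.eval y q.leadingCoeff) := by
        intro q hq
        refine hsig _ (List.mem_append.mpr (Or.inl (List.mem_append.mpr (Or.inl ?_))))
        exact List.mem_map.mpr ⟨q, Multiset.mem_toList.mpr hq, rfl⟩
      have hsigd : SignType.sign (MvPolynomial.eval x (derivative p).leadingCoeff) =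
          SignType.sign (MvPolynomial.eval y (derivative p).leadingCoeff) := by
        refine hsig _ (List.mem_append.mpr (Or.inl (List.mem_append.mpr (Or.inr ?_))))
        exact List.mem_cons_self
      have hsigG' : ∀ g ∈ G', SignType.sign (MvPolynomial.eval x g) =
          SignType.sign (MvPolynomial.eval y g) := by
        intro g hg
        refine hsig _ (List.mem_append.mpr (Or.inl (List.mem_append.mpr (Or.inr ?_))))
        exact List.mem_cons_of_mem _ hg
      have hsigGf : ∀ r ∈ P, ∀ g ∈ Gf r, SignType.sign (MvPolynomial.eval x g) =
          SignType.sign (MvPolynomial.eval y g) := by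
        intro r hr g hg
        refine hsig _ (List.mem_append.mpr (Or.inr ?_))
        exact List.mem_flatten.mpr ⟨Gf r, List.mem_map.mpr ⟨r, Multiset.mem_toList.mpr hr, rfl⟩, hg⟩
      by_cases hdgn : ∃ r ∈ P, r ≠ 0 ∧ MvPolynomial.eval x r.leadingCoeff = 0
      · -- degenerate: leading coefficient vanishes; use the eraseLead recursion
        obtain ⟨r, hrP, hrne, hrlc⟩ := hdgn
        have hylc : MvPolynomial.eval y r.leadingCoeff = 0 := by
          have h1 := hsiglc r hrP
          rw [sign_eq_zero_iff.mpr hrlc] at h1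
          exact sign_eq_zero_iff.mp h1.symm
        obtain ⟨φ, hm, hs, hmatch⟩ := hGf r hrP hrne x y (hsigGf r hrP)
        refine ⟨φ, hm, hs, ?_⟩
        intro q hqP t
        by_cases hq : q = r
        · subst hq
          rw [mapx_eraseLead hrlc, mapx_eraseLead hylc]
          exact hmatch q.eraseLead (Multiset.mem_cons_self _ _) t
        · exact hmatch q (Multiset.mem_cons_of_mem ((Multiset.mem_erase_of_ne hq).mpr hqP)) t
      · -- nondegenerate: apply the core lemma
        push_neg at hdgn
        have hdgny : ∀ q ∈ P, q ≠ 0 → MvPolynomial.eval y q.leadingCoeff ≠ 0 := by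
          intro q hq hqne h0
          have h1 := hsiglc q hq
          rw [sign_eq_zero_iff.mpr h0] at h1
          exact hdgn q hq hqne (sign_eq_zero_iff.mp h1)
        obtain ⟨ψ, hψm, hψs, hψmatch⟩ := hG' x y hsigG'
        set F : List (Polynomial ℝ × Polynomial ℝ) :=
          F0.toList.map (fun q => (mapx x q, mapx y q)) with hFdef
        have hlcpx : MvPolynomial.eval x p.leadingCoeff ≠ 0 := hdgn p hpP hp0
        have hlcpy : MvPolynomial.eval y p.leadingCoeff ≠ 0 := hdgny p hpP hp0
        have hpdegx : 0 < (mapx x p).natDegree := by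
          rw [mapx, natDegree_map_of_leadingCoeff_ne_zero _ hlcpx]
          omega
        have hpdegy : 0 < (mapx y p).natDegree := by
          rw [mapx, natDegree_map_of_leadingCoeff_ne_zero _ hlcpy]
          omega
        have hdF : (derivative (mapx x p), derivative (mapx y p)) ∈ F := by
          have h1 : derivative (mapx x p) = mapx x (derivative p) := derivative_map p _
          have h2 : derivative (mapx y p) = mapx y (derivative p) := derivative_map p _
          rw [h1, h2]
          exact List.mem_map.mpr ⟨derivative p,
            Multiset.mem_toList.mpr (Multiset.mem_cons_self _ _), rfl⟩
        have hψF : ∀ qq ∈ F, ∀ t, SignType.sign (qq.1.eval (ψ t)) =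
            SignType.sign (qq.2.eval t) := by
          rintro qq hqq t
          obtain ⟨q, hqF0, rfl⟩ := List.mem_map.mp hqq
          exact hψmatch q (hF0P' q (Multiset.mem_toList.mp hqF0)) t
        -- first: decompose the leading coefficient facts for members of F0
        have hlcF0 : ∀ q ∈ F0, q ≠ 0 →
            (MvPolynomial.eval x q.leadingCoeff ≠ 0 ∧
             MvPolynomial.eval y q.leadingCoeff ≠ 0 ∧
             SignType.sign (MvPolynomial.eval x q.leadingCoeff) =
               SignType.sign (MvPolynomial.eval y q.leadingCoeff)) := by
          intro q hqF0 hqne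
          rcases Multiset.mem_cons.mp hqF0 with rfl | hqQ
          · obtain ⟨hdd, hlcd⟩ := derivative_facts (q := p) (by omega)
            have hcast : ∀ z : Fin n → ℝ,
                MvPolynomial.eval z (derivative p).leadingCoeff =
                  (p.natDegree : ℝ) * MvPolynomial.eval z p.leadingCoeff := by
              intro z
              rw [hlcd, map_mul, map_natCast]
            have hdne : (p.natDegree : ℝ) ≠ 0 := Nat.cast_ne_zero.mpr (by omega)
            refine ⟨by rw [hcast]; exact mul_ne_zero hdne hlcpx,
              by rw [hcast]; exact mul_ne_zero hdne hlcpy, hsigd⟩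
          · have hqP : q ∈ P := Multiset.mem_of_le hQle hqQ
            exact ⟨hdgn q hqP hqne, hdgny q hqP hqne, hsiglc q hqP⟩
        have hH2 : ∀ w, (∃ qq ∈ F, qq.2 ≠ 0 ∧ qq.2.eval w = 0) →
            SignType.sign ((mapx x p).eval (ψ w)) = SignType.sign ((mapx y p).eval w) := by
          rintro w ⟨qq, hqq, hqq2, hqqroot⟩
          obtain ⟨q, hqF0', rfl⟩ := List.mem_map.mp hqq
          have hqF0 : q ∈ F0 := Multiset.mem_toList.mp hqF0'
          simp only at hqq2 hqqroot
          have hqne : q ≠ 0 := by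
            intro h
            apply hqq2
            rw [h, mapx, Polynomial.map_zero]
          obtain ⟨hlcx, hlcy, hslc⟩ := hlcF0 q hqF0 hqne
          by_cases hqd0 : q.natDegree = 0
          · exfalso
            have h1 : q = Polynomial.C (q.coeff 0) := eq_C_of_natDegree_eq_zero hqd0
            have h2 : q.leadingCoeff = q.coeff 0 := by
              rw [Polynomial.leadingCoeff, hqd0]
            rw [h1] at hqqroot
            rw [mapx, Polynomial.map_C, Polynomial.eval_C] at hqqroot
            rw [h2] at hlcy
            exact hlcy hqqroot
          · have hq1 : 1 ≤ q.natDegree := by omega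
            obtain ⟨kk, hh, hEq⟩ := prem_spec p q hq1
            have hevalid : ∀ (z : Fin n → ℝ) (u : ℝ),
                (MvPolynomial.eval z q.leadingCoeff) ^ kk * (mapx z p).eval u =
                  (mapx z hh).eval u * (mapx z q).eval u + (mapx z (prem p q)).eval u := by
              intro z u
              have h3 := congrArg (fun r => (mapx z r).eval u) hEq
              simp only [mapx, Polynomial.map_mul, Polynomial.map_add, Polynomial.map_pow,
                Polynomial.map_C, Polynomial.eval_mul, Polynomial.eval_add, Polynomial.eval_pow,
                Polynomial.eval_C] at h3
              exact h3
            have hxroot : (mapx x q).eval (ψ w) = 0 := by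
              have h3 := hψmatch q (hF0P' q hqF0) w
              rw [hqqroot, sign_zero] at h3
              exact sign_eq_zero_iff.mp h3
            have hEx := hevalid x (ψ w)
            have hEy := hevalid y w
            rw [hxroot, mul_zero, zero_add] at hEx
            rw [hqqroot, mul_zero, zero_add] at hEy
            have hrsign := hψmatch (prem p q) (hpremP' q hqF0) w
            have e1 : SignType.sign (MvPolynomial.eval x q.leadingCoeff) ^ kk *
                SignType.sign ((mapx x p).eval (ψ w)) =
                SignType.sign ((mapx x (prem p q)).eval (ψ w)) := by
              rw [← sign_pow, ← sign_mul, hEx]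
            have e2 : SignType.sign (MvPolynomial.eval y q.leadingCoeff) ^ kk *
                SignType.sign ((mapx y p).eval w) =
                SignType.sign ((mapx y (prem p q)).eval w) := by
              rw [← sign_pow, ← sign_mul, hEy]
            rw [hslc] at e1
            have hsne : SignType.sign (MvPolynomial.eval y q.leadingCoeff) ≠ 0 :=
              fun h => hlcy (sign_eq_zero_iff.mp h)
            exact sign_cancel_pow hsne kk (e1.trans (hrsign.trans e2.symm))
        obtain ⟨φ, hφm, hφs, hφp, hφF⟩ := core (mapx x p) (mapx y p) F hpdegx hpdegy hdF
          ψ hψm hψs hψF hH2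
        refine ⟨φ, hφm, hφs, ?_⟩
        intro q hqP t
        by_cases hq : q = p
        · subst hq
          exact hφp t
        · have hqQ : q ∈ Q := (Multiset.mem_erase_of_ne hq).mpr hqP
          exact hφF (mapx x q, mapx y q)
            (List.mem_map.mpr ⟨q, Multiset.mem_toList.mpr (Multiset.mem_cons_of_mem hqQ), rfl⟩) t

theorem signDet_exists (P : Multiset (PR n)) : ∃ G, SignDet P G := by
  rcases eq_or_ne P 0 with rfl | hP0
  · exact ⟨[], fun x y _ => ⟨id, strictMono_id, Function.surjective_id, by simp⟩⟩
  · obtain ⟨p, hpP, hpmax⟩ := multiset_exists_max Polynomial.natDegree P hP0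
    exact signDet_aux p.natDegree (degcnt p.natDegree P) (weight P) P hpmax le_rfl le_rfl

end MainInduction
section Projection

open Polynomial

variable {n : ℕ}

/-- View a polynomial in `n+1` variables as a one-variable polynomial (in the last
variable) over `ℝ[x₁,…,xₙ]`. -/
noncomputable def toPoly : MvPolynomial (Fin (n+1)) ℝ →ₐ[ℝ] PR n :=
  MvPolynomial.aeval (fun i => Fin.lastCases Polynomial.X
    (fun j => Polynomial.C (MvPolynomial.X j)) i)

lemma toPoly_eval (x : Fin n → ℝ) (t : ℝ) (f : MvPolynomial (Fin (n+1)) ℝ) :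
    MvPolynomial.eval (Fin.snoc x t) f = (mapx x (toPoly f)).eval t := by
  have key : (MvPolynomial.eval (Fin.snoc x t) : MvPolynomial (Fin (n+1)) ℝ →+* ℝ) =
      ((Polynomial.evalRingHom t).comp ((Polynomial.mapRingHom (MvPolynomial.eval x)).comp
        (toPoly.toRingHom : MvPolynomial (Fin (n+1)) ℝ →+* PR n))) := by
    apply MvPolynomial.ringHom_ext
    · intro r
      simp only [MvPolynomial.eval_C, RingHom.coe_comp, Function.comp_apply,
        AlgHom.toRingHom_eq_coe, AlgHom.coe_toRingHom]
      rw [show (MvPolynomial.C r : MvPolynomial (Fin (n+1)) ℝ) =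
        algebraMap ℝ (MvPolynomial (Fin (n+1)) ℝ) r from rfl]
      rw [AlgHom.commutes]
      rw [show algebraMap ℝ (PR n) r = Polynomial.C (MvPolynomial.C r) from rfl]
      simp
    · intro i
      simp only [RingHom.coe_comp, Function.comp_apply, AlgHom.toRingHom_eq_coe,
        AlgHom.coe_toRingHom, MvPolynomial.eval_X]
      rw [toPoly, MvPolynomial.aeval_X]
      induction i using Fin.lastCases with
      | last =>
        simp [Fin.snoc_last]
      | cast j =>
        simp [Fin.snoc_castSucc]
  have := congrArg (fun h : MvPolynomial (Fin (n+1)) ℝ →+* ℝ => h f) key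
  simpa [mapx] using this

lemma isSemialgebraic_signCond (g : MvPolynomial (Fin n) ℝ) (ε : SignType) :
    IsSemialgebraic {x | SignType.sign (MvPolynomial.eval x g) = ε} := by
  rcases ε with _ | _ | _
  · -- ε = 0 : g = 0
    show IsSemialgebraic {x | SignType.sign (MvPolynomial.eval x g) = (0 : SignType)}
    have : {x : Fin n → ℝ | SignType.sign (MvPolynomial.eval x g) = 0}
        = {x | (∀ f ∈ ([] : List (MvPolynomial (Fin n) ℝ)), 0 < MvPolynomial.eval x f) ∧
            (∀ h ∈ [g], MvPolynomial.eval x h = 0)} := by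
      ext x
      simp only [Set.mem_setOf_eq, List.mem_singleton, List.not_mem_nil, false_implies,
        implies_true, true_and, forall_eq]
      exact sign_eq_zero_iff
    rw [this]
    exact basic_isSemialgebraic (isBasic_list _ _)
  · -- ε = -1 : g < 0
    show IsSemialgebraic {x | SignType.sign (MvPolynomial.eval x g) = (-1 : SignType)}
    have : {x : Fin n → ℝ | SignType.sign (MvPolynomial.eval x g) = -1}
        = {x | (∀ f ∈ [-g], 0 < MvPolynomial.eval x f) ∧
            (∀ h ∈ ([] : List (MvPolynomial (Fin n) ℝ)), MvPolynomial.eval x h = 0)} := by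
      ext x
      simp only [Set.mem_setOf_eq, List.mem_singleton, List.not_mem_nil, false_implies,
        implies_true, and_true, forall_eq, map_neg]
      rw [sign_eq_neg_one_iff]
      constructor <;> intro h <;> linarith
    rw [this]
    exact basic_isSemialgebraic (isBasic_list _ _)
  · -- ε = 1 : 0 < g
    show IsSemialgebraic {x | SignType.sign (MvPolynomial.eval x g) = (1 : SignType)}
    have : {x : Fin n → ℝ | SignType.sign (MvPolynomial.eval x g) = 1}
        = {x | (∀ f ∈ [g], 0 < MvPolynomial.eval x f) ∧
            (∀ h ∈ ([] : List (MvPolynomial (Fin n) ℝ)), MvPolynomial.eval x h = 0)} := by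
      ext x
      simp only [Set.mem_setOf_eq, List.mem_singleton, List.not_mem_nil, false_implies,
        implies_true, and_true, forall_eq]
      exact sign_eq_one_iff
    rw [this]
    exact basic_isSemialgebraic (isBasic_list _ _)

lemma isSemialgebraic_signCell (G : List (MvPolynomial (Fin n) ℝ))
    (ε : Fin G.length → SignType) :
    IsSemialgebraic {x | ∀ i : Fin G.length,
      SignType.sign (MvPolynomial.eval x (G.get i)) = ε i} := by
  have : {x | ∀ i : Fin G.length, SignType.sign (MvPolynomial.eval x (G.get i)) = ε i}
      = ⋂ i : Fin G.length, {x | SignType.sign (MvPolynomial.eval x (G.get i)) = ε i} := by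
    ext x
    simp [Set.mem_iInter]
  rw [this]
  exact isSemialgebraic_iInter _ fun i => isSemialgebraic_signCond _ _

/-- Projection of a basic semialgebraic subset of `ℝ^{n+1}` along the last coordinate. -/
lemma isSemialgebraic_proj_basic {B : Set (Fin (n+1) → ℝ)} (hB : IsBasicSemialgebraic B) :
    IsSemialgebraic {x : Fin n → ℝ | ∃ t : ℝ, Fin.snoc x t ∈ B} := by
  classical
  rw [isBasic_iff_list] at hB
  obtain ⟨fs, gs, rfl⟩ := hB
  set PM : Multiset (PR n) := ↑((fs ++ gs).map (fun f => toPoly f)) with hPMdef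
  obtain ⟨G, hG⟩ := signDet_exists PM
  set E := {x : Fin n → ℝ | ∃ t : ℝ, Fin.snoc x t ∈
    {z | (∀ f ∈ fs, 0 < MvPolynomial.eval z f) ∧ (∀ g ∈ gs, MvPolynomial.eval z g = 0)}}
    with hEdef
  set cell : (Fin G.length → SignType) → Set (Fin n → ℝ) := fun ε =>
    {x | ∀ i : Fin G.length, SignType.sign (MvPolynomial.eval x (G.get i)) = ε i}
    with hcelldef
  have hEuni : E = ⋃ ε : Fin G.length → SignType, (if cell ε ⊆ E then cell ε else ∅) := by
    apply subset_antisymm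
    · intro x hx
      refine Set.mem_iUnion.mpr ⟨fun i => SignType.sign (MvPolynomial.eval x (G.get i)), ?_⟩
      have hcm : x ∈ cell (fun i => SignType.sign (MvPolynomial.eval x (G.get i))) :=
        fun i => rfl
      have hsub : cell (fun i => SignType.sign (MvPolynomial.eval x (G.get i))) ⊆ E := by
        intro x' hx'
        -- sign conditions of G agree between x' and x
        have hsig : ∀ g ∈ G, SignType.sign (MvPolynomial.eval x' g) =
            SignType.sign (MvPolynomial.eval x g) := by
          intro g hg
          obtain ⟨i, rfl⟩ := List.mem_iff_get.mp hg
          exact hx' i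
        obtain ⟨φ, hφm, hφs, hmatch⟩ := hG x' x hsig
        obtain ⟨t, ht1, ht2⟩ := hx
        refine ⟨φ t, ?_, ?_⟩
        · intro f hf
          have hq : toPoly f ∈ PM := by
            rw [hPMdef]
            simp only [Multiset.mem_coe, List.mem_map]
            exact ⟨f, List.mem_append.mpr (Or.inl hf), rfl⟩
          have h1 := hmatch (toPoly f) hq t
          rw [← toPoly_eval, ← toPoly_eval] at h1
          have h2 : SignType.sign (MvPolynomial.eval (Fin.snoc x t) f) = 1 :=
            sign_eq_one_iff.mpr (ht1 f hf)
          rw [h2] at h1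
          exact sign_eq_one_iff.mp h1
        · intro g hg
          have hq : toPoly g ∈ PM := by
            rw [hPMdef]
            simp only [Multiset.mem_coe, List.mem_map]
            exact ⟨g, List.mem_append.mpr (Or.inr hg), rfl⟩
          have h1 := hmatch (toPoly g) hq t
          rw [← toPoly_eval, ← toPoly_eval] at h1
          have h2 : SignType.sign (MvPolynomial.eval (Fin.snoc x t) g) = 0 :=
            sign_eq_zero_iff.mpr (ht2 g hg)
          rw [h2] at h1
          exact sign_eq_zero_iff.mp h1
      rw [if_pos hsub]
      exact hcm
    · refine Set.iUnion_subset fun ε => ?_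
      by_cases h : cell ε ⊆ E
      · rw [if_pos h]; exact h
      · rw [if_neg h]; exact Set.empty_subset _
  rw [hEuni]
  refine isSemialgebraic_iUnion _ fun ε => ?_
  by_cases h : cell ε ⊆ E
  · rw [if_pos h]; exact isSemialgebraic_signCell G ε
  · rw [if_neg h]; exact isSemialgebraic_empty

/-- Projection of a semialgebraic subset of `ℝ^{n+1}` along the last coordinate
(Tarski–Seidenberg). -/
theorem isSemialgebraic_proj {S : Set (Fin (n+1) → ℝ)} (hS : IsSemialgebraic S) :
    IsSemialgebraic {x : Fin n → ℝ | ∃ t : ℝ, Fin.snoc x t ∈ S} := by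
  obtain ⟨r, B, hB, rfl⟩ := hS
  have : {x : Fin n → ℝ | ∃ t : ℝ, Fin.snoc x t ∈ ⋃ i, B i}
      = ⋃ i, {x : Fin n → ℝ | ∃ t : ℝ, Fin.snoc x t ∈ B i} := by
    ext x
    simp only [Set.mem_setOf_eq, Set.mem_iUnion]
    tauto
  rw [this]
  exact isSemialgebraic_iUnion _ fun i => isSemialgebraic_proj_basic (hB i)

end Projection

end TS

/-- Tarski–Seidenberg, logical form: the set of points satisfying a first-order formula
of the language of ordered fields with real parameters is semialgebraic. -/
theorem isSemialgebraic_setOf_holds {n : ℕ} (φ : RealFormula n) :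
    IsSemialgebraic {x : Fin n → ℝ | φ.Holds x} := by
  induction φ with
  | eq f =>
    refine TS.basic_isSemialgebraic ?_
    rw [TS.isBasic_iff_list]
    refine ⟨[], [f], ?_⟩
    ext x
    simp [RealFormula.Holds]
  | pos g =>
    refine TS.basic_isSemialgebraic ?_
    rw [TS.isBasic_iff_list]
    refine ⟨[g], [], ?_⟩
    ext x
    simp [RealFormula.Holds]
  | and φ ψ ihφ ihψ =>
    have h : {x : Fin _ → ℝ | RealFormula.Holds (.and φ ψ) x}
        = {x | φ.Holds x} ∩ {x | ψ.Holds x} := rfl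
    rw [h]
    exact TS.sa_inter ihφ ihψ
  | or φ ψ ihφ ihψ =>
    have h : {x : Fin _ → ℝ | RealFormula.Holds (.or φ ψ) x}
        = {x | φ.Holds x} ∪ {x | ψ.Holds x} := rfl
    rw [h]
    exact TS.sa_union ihφ ihψ
  | not φ ih =>
    have h : {x : Fin _ → ℝ | RealFormula.Holds (.not φ) x} = {x | φ.Holds x}ᶜ := rfl
    rw [h]
    exact TS.sa_compl ih
  | ex φ ih =>
    have h : {x : Fin _ → ℝ | RealFormula.Holds (.ex φ) x}
        = {x | ∃ t : ℝ, Fin.snoc x t ∈ {z | φ.Holds z}} := rfl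
    rw [h]
    exact TS.isSemialgebraic_proj ih
  | all φ ih =>
    have h : {x : Fin _ → ℝ | RealFormula.Holds (.all φ) x}
        = {x | ∃ t : ℝ, Fin.snoc x t ∈ {z | φ.Holds z}ᶜ}ᶜ := by
      ext x
      simp only [Set.mem_setOf_eq, Set.mem_compl_iff, not_exists, not_not,
        RealFormula.Holds]
    rw [h]
    exact TS.sa_compl (TS.isSemialgebraic_proj (TS.sa_compl ih))
end

section
/- (Nash implicit function theorem) Let (x⁰, y⁰) ∈ ℝ^{n+p}, and let f_1, …, f_p be smooth (C^∞) semialgebraic real-valued functions defined on an open semialgebraic neighborhood of (x⁰, y⁰) in ℝ^{n+p}, such that f_j(x⁰, y⁰) = 0 for j = 1, …, p and the p × p matrix [∂f_j/∂y_i (x⁰, y⁰)] is invertible. Then there exist open semialgebraic neighborhoods U of x⁰ in ℝ^n and V of y⁰ in ℝ^p, and a smooth semialgebraic (Nash) map φ : U → V, such that φ(x⁰) = y⁰ and for every (x, y) ∈ U × V one has: f_1(x,y) = … = f_p(x,y) = 0 if and only if y = φ(x). -/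
set_option maxRecDepth 4000


lemma forall_append_iff {α : Type*} {s t : ℕ} (f : Fin s → α) (g : Fin t → α) (P : α → Prop) :
    (∀ i, P (Fin.append f g i)) ↔ (∀ i, P (f i)) ∧ (∀ j, P (g j)) := by
  constructor
  · intro h
    exact ⟨fun i => by simpa [Fin.append_left] using h (Fin.castAdd t i),
           fun j => by simpa [Fin.append_right] using h (Fin.natAdd s j)⟩
  · rintro ⟨h1, h2⟩ i
    induction i using Fin.addCases with
    | left i => simpa [Fin.append_left] using h1 i
    | right j => simpa [Fin.append_right] using h2 j

lemma IsBasicSemialgebraic.inter {n : ℕ} {A B : Set (Fin n → ℝ)}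
    (hA : IsBasicSemialgebraic A) (hB : IsBasicSemialgebraic B) :
    IsBasicSemialgebraic (A ∩ B) := by
  obtain ⟨s1, t1, f1, g1, rfl⟩ := hA
  obtain ⟨s2, t2, f2, g2, rfl⟩ := hB
  refine ⟨s1 + s2, t1 + t2, Fin.append f1 f2, Fin.append g1 g2, ?_⟩
  ext x
  simp only [Set.mem_inter_iff, Set.mem_setOf_eq,
    forall_append_iff f1 f2 (fun q => 0 < MvPolynomial.eval x q),
    forall_append_iff g1 g2 (fun q => MvPolynomial.eval x q = 0)]
  tauto

lemma IsSemialgebraic.inter {n : ℕ} {A B : Set (Fin n → ℝ)}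
    (hA : IsSemialgebraic A) (hB : IsSemialgebraic B) :
    IsSemialgebraic (A ∩ B) := by
  obtain ⟨r1, S1, hS1, rfl⟩ := hA
  obtain ⟨r2, S2, hS2, rfl⟩ := hB
  refine ⟨r1 * r2, fun k => S1 (finProdFinEquiv.symm k).1 ∩ S2 (finProdFinEquiv.symm k).2,
    fun k => (hS1 _).inter (hS2 _), ?_⟩
  ext x
  simp only [Set.mem_inter_iff, Set.mem_iUnion]
  constructor
  · rintro ⟨⟨i, hi⟩, ⟨j, hj⟩⟩
    exact ⟨finProdFinEquiv (i, j), by simpa using ⟨hi, hj⟩⟩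
  · rintro ⟨k, hk1, hk2⟩
    exact ⟨⟨_, hk1⟩, ⟨_, hk2⟩⟩

lemma isSemialgebraic_univ {n : ℕ} : IsSemialgebraic (Set.univ : Set (Fin n → ℝ)) := by
  refine ⟨1, fun _ => Set.univ, fun _ => ⟨0, 0, Fin.elim0, Fin.elim0, ?_⟩,
    (Set.iUnion_const Set.univ).symm⟩
  ext x
  simp

lemma IsSemialgebraic.iInter {n k : ℕ} {S : Fin k → Set (Fin n → ℝ)}
    (h : ∀ i, IsSemialgebraic (S i)) : IsSemialgebraic (⋂ i, S i) := by
  induction k with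
  | zero => simpa using isSemialgebraic_univ
  | succ k ih =>
    have : (⋂ i, S i) = S 0 ∩ ⋂ i : Fin k, S i.succ := by
      ext x; simp [Fin.forall_fin_succ]
    rw [this]
    exact (h 0).inter (ih fun i => h i.succ)

lemma IsSemialgebraic.preimage_poly {M N : ℕ} (q : Fin M → MvPolynomial (Fin N) ℝ)
    {S : Set (Fin M → ℝ)} (h : IsSemialgebraic S) :
    IsSemialgebraic {x : Fin N → ℝ | (fun i => MvPolynomial.eval x (q i)) ∈ S} := by
  obtain ⟨r, T, hT, rfl⟩ := h
  refine ⟨r, fun k => {x | (fun i => MvPolynomial.eval x (q i)) ∈ T k}, fun k => ?_, by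
    ext x; simp [Set.mem_iUnion]⟩
  obtain ⟨s, t, f, g, hTk⟩ := hT k
  have key : ∀ (P : MvPolynomial (Fin M) ℝ) (x : Fin N → ℝ),
      MvPolynomial.eval (fun i => MvPolynomial.eval x (q i)) P
        = MvPolynomial.eval x (MvPolynomial.bind₁ q P) := by
    intro P x
    exact (MvPolynomial.eval₂Hom_bind₁ (RingHom.id ℝ) x q P).symm
  refine ⟨s, t, fun i => MvPolynomial.bind₁ q (f i), fun j => MvPolynomial.bind₁ q (g j), ?_⟩
  ext x
  simp only [Set.mem_setOf_eq, hTk]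
  constructor
  · rintro ⟨h1, h2⟩
    exact ⟨fun i => by rw [← key]; exact h1 i, fun j => by rw [← key]; exact h2 j⟩
  · rintro ⟨h1, h2⟩
    exact ⟨fun i => by rw [key]; exact h1 i, fun j => by rw [key]; exact h2 j⟩

noncomputable def ballPoly {n : ℕ} (c : Fin n → ℝ) (r : ℝ) : MvPolynomial (Fin n) ℝ :=
  MvPolynomial.C (r^2) - ∑ i, (MvPolynomial.X i - MvPolynomial.C (c i))^2

lemma eval_ballPoly {n : ℕ} (c : Fin n → ℝ) (r : ℝ) (x : Fin n → ℝ) :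
    MvPolynomial.eval x (ballPoly c r) = r^2 - ∑ i, (x i - c i)^2 := by
  simp [ballPoly]

def sqBall {n : ℕ} (c : Fin n → ℝ) (r : ℝ) : Set (Fin n → ℝ) :=
  {x | ∑ i, (x i - c i)^2 < r^2}

lemma isOpen_sqBall {n : ℕ} (c : Fin n → ℝ) (r : ℝ) : IsOpen (sqBall c r) :=
  isOpen_lt (continuous_finset_sum _ fun i _ =>
    ((continuous_apply i).sub continuous_const).pow 2) continuous_const

lemma isSemialgebraic_sqBall {n : ℕ} (c : Fin n → ℝ) (r : ℝ) :
    IsSemialgebraic (sqBall c r) := by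
  refine ⟨1, fun _ => sqBall c r, fun _ => ⟨1, 0, fun _ => ballPoly c r, Fin.elim0, ?_⟩,
    (Set.iUnion_const _).symm⟩
  ext x
  simp [sqBall, eval_ballPoly, sub_pos]

lemma mem_sqBall_self {n : ℕ} (c : Fin n → ℝ) {r : ℝ} (hr : 0 < r) : c ∈ sqBall c r := by
  simp [sqBall, pow_pos hr]

lemma dist_lt_of_mem_sqBall {n : ℕ} {c x : Fin n → ℝ} {r : ℝ} (hr : 0 < r)
    (hx : x ∈ sqBall c r) (i : Fin n) : dist (x i) (c i) < r := by
  rw [Real.dist_eq]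
  have h1 : (x i - c i)^2 < r^2 := by
    refine lt_of_le_of_lt ?_ hx
    exact Finset.single_le_sum (fun j _ => sq_nonneg (x j - c j)) (Finset.mem_univ i)
  exact abs_lt_of_sq_lt_sq h1 hr.le

lemma isSemialgebraic_zeroSet {N : ℕ} {W : Set (Fin N → ℝ)} {f : (Fin N → ℝ) → ℝ}
    (h : IsSemialgebraic {z : Fin (N+1) → ℝ | ∃ x ∈ W, z = Fin.snoc x (f x)}) :
    IsSemialgebraic {z : Fin N → ℝ | z ∈ W ∧ f z = 0} := by
  have hpre := h.preimage_poly ((Fin.snoc (fun i => MvPolynomial.X i) 0 : Fin (N+1) → MvPolynomial (Fin N) ℝ))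
  convert hpre using 1
  ext z
  have hev : (fun i => MvPolynomial.eval z
      ((Fin.snoc (fun i => MvPolynomial.X i) 0 : Fin (N+1) → MvPolynomial (Fin N) ℝ) i))
      = Fin.snoc z 0 := by
    funext i
    induction i using Fin.lastCases with
    | last => simp
    | cast i => simp
  simp only [Set.mem_setOf_eq, hev]
  constructor
  · rintro ⟨hz, hf⟩
    exact ⟨z, hz, by rw [hf]⟩
  · rintro ⟨x, hx, heq⟩
    have hzx : z = x := by
      funext i
      have := congrFun heq (Fin.castSucc i)
      simpa using this
    have h0 : (0 : ℝ) = f x := by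
      have := congrFun heq (Fin.last N)
      simpa using this
    subst hzx
    exact ⟨hx, h0.symm⟩

lemma append_comp_eq {n p : ℕ} (z : Fin (n+p) → ℝ) :
    Fin.append (fun i => z (Fin.castAdd p i)) (fun j => z (Fin.natAdd n j)) = z := by
  funext i
  induction i using Fin.addCases with
  | left i => simp [Fin.append_left]
  | right j => simp [Fin.append_right]

/-- Nash implicit function theorem: given smooth semialgebraic functions f_1, ..., f_p on an
open semialgebraic neighborhood of (x0, y0) in ℝ^(n+p), vanishing at (x0, y0) and with an
invertible Jacobian in the y-directions, there are open semialgebraic neighborhoods U of x0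
and V of y0 and a Nash map φ : U → V with φ x0 = y0 such that on U × V the system
f_1 = ... = f_p = 0 is equivalent to y = φ x. -/
theorem nash_implicit_function {n p : ℕ}
    (x0 : Fin n → ℝ) (y0 : Fin p → ℝ)
    (W : Set (Fin (n + p) → ℝ)) (hWopen : IsOpen W) (hWsa : IsSemialgebraic W)
    (hmem : Fin.append x0 y0 ∈ W)
    (f : Fin p → (Fin (n + p) → ℝ) → ℝ)
    (hsmooth : ∀ j, ContDiffOn ℝ (⊤ : ℕ∞) (f j) W)
    (hsa : ∀ j, IsSemialgebraicFunOn W (f j))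
    (hzero : ∀ j, f j (Fin.append x0 y0) = 0)
    (hjac : (Matrix.of fun (j i : Fin p) =>
        fderiv ℝ (f j) (Fin.append x0 y0) (Pi.single (Fin.natAdd n i) 1)).det ≠ 0) :
    ∃ (U : Set (Fin n → ℝ)) (V : Set (Fin p → ℝ)) (φ : (Fin n → ℝ) → (Fin p → ℝ)),
      IsOpen U ∧ IsSemialgebraic U ∧ x0 ∈ U ∧
      IsOpen V ∧ IsSemialgebraic V ∧ y0 ∈ V ∧
      Set.MapsTo φ U V ∧
      ContDiffOn ℝ (⊤ : ℕ∞) φ U ∧ IsSemialgebraicMapOn U φ ∧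
      φ x0 = y0 ∧
      ∀ x ∈ U, ∀ y ∈ V, ((∀ j, f j (Fin.append x y) = 0) ↔ y = φ x) := by
  classical
  have hone : (1 : WithTop ℕ∞) ≤ ((⊤ : ℕ∞) : WithTop ℕ∞) := by exact_mod_cast le_top
  set z0 : Fin (n + p) → ℝ := Fin.append x0 y0 with hz0
  set F : (Fin (n + p) → ℝ) → (Fin (n + p) → ℝ) :=
    fun z => Fin.append (fun i => z (Fin.castAdd p i)) (fun j => f j z) with hF
  set DF : (Fin (n + p) → ℝ) → (Fin (n + p) → ℝ) →L[ℝ] (Fin (n + p) → ℝ) :=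
    fun z => ContinuousLinearMap.pi (fun i => Fin.addCases
      (fun i' => ContinuousLinearMap.proj (Fin.castAdd p i'))
      (fun j => fderiv ℝ (f j) z) i) with hDF
  set Amat : (Fin (n + p) → ℝ) → Matrix (Fin p) (Fin p) ℝ :=
    fun z => Matrix.of fun j i => fderiv ℝ (f j) z (Pi.single (Fin.natAdd n i) 1) with hAmat
  set Bmat : (Fin (n + p) → ℝ) → Matrix (Fin p) (Fin n) ℝ :=
    fun z => Matrix.of fun j i => fderiv ℝ (f j) z (Pi.single (Fin.castAdd p i) 1) with hBmat
  -- derivative of F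
  have hFderiv : ∀ z ∈ W, HasFDerivAt F (DF z) z := by
    intro z hz
    rw [hasFDerivAt_pi']
    intro i
    rw [hDF, ContinuousLinearMap.proj_pi]
    induction i using Fin.addCases with
    | left i =>
      simp only [hF, Fin.append_left, Fin.addCases_left]
      exact hasFDerivAt_apply (Fin.castAdd p i) z
    | right j =>
      simp only [hF, Fin.append_right, Fin.addCases_right]
      exact (((hsmooth j).contDiffAt (hWopen.mem_nhds hz)).differentiableAt (by simp)).hasFDerivAt
  -- smoothness of F
  have hFsmooth : ∀ z ∈ W, ContDiffAt ℝ (⊤ : ℕ∞) F z := by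
    intro z hz
    rw [contDiffAt_pi]
    intro i
    induction i using Fin.addCases with
    | left i =>
      simp only [hF, Fin.append_left]
      exact (contDiff_apply ℝ ℝ (Fin.castAdd p i)).contDiffAt
    | right j =>
      simp only [hF, Fin.append_right]
      exact (hsmooth j).contDiffAt (hWopen.mem_nhds hz)
  -- invertibility of DF z where the Jacobian block is invertible
  have hequiv : ∀ z ∈ W, (Amat z).det ≠ 0 →
      ∃ e : (Fin (n + p) → ℝ) ≃L[ℝ] (Fin (n + p) → ℝ),
        (e : (Fin (n + p) → ℝ) →L[ℝ] (Fin (n + p) → ℝ)) = DF z := by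
    intro z hz hdet
    have hM : LinearMap.toMatrix' ((DF z) : (Fin (n + p) → ℝ) →ₗ[ℝ] (Fin (n + p) → ℝ))
        = (Matrix.reindex finSumFinEquiv finSumFinEquiv
            (Matrix.fromBlocks 1 0 (Bmat z) (Amat z))) := by
      ext i k
      rw [LinearMap.toMatrix'_apply]
      have hv : (fun j' => if j' = k then (1 : ℝ) else 0) = Pi.single k 1 := by
        funext j'
        simp [Pi.single_apply]
      induction i using Fin.addCases with
      | left i' =>
        induction k using Fin.addCases with
        | left k' =>
          simp only [hDF, ContinuousLinearMap.coe_coe, ContinuousLinearMap.pi_apply,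
            Fin.addCases_left, ContinuousLinearMap.proj_apply, Matrix.reindex_apply,
            Matrix.submatrix_apply, finSumFinEquiv_symm_apply_castAdd,
            Matrix.fromBlocks_apply₁₁, Matrix.one_apply, Pi.single_apply]
          by_cases h : i' = k'
          · simp [h]
          · have : Fin.castAdd p i' ≠ Fin.castAdd p k' := by
              simp [Fin.ext_iff] at h ⊢
              omega
            simp [h, this]
        | right k' =>
          simp only [hDF, ContinuousLinearMap.coe_coe, ContinuousLinearMap.pi_apply,
            Fin.addCases_left, ContinuousLinearMap.proj_apply, Matrix.reindex_apply,
            Matrix.submatrix_apply, finSumFinEquiv_symm_apply_castAdd,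
            finSumFinEquiv_symm_apply_natAdd, Matrix.fromBlocks_apply₁₂,
            Matrix.zero_apply, Pi.single_apply]
          have : Fin.castAdd p i' ≠ Fin.natAdd n k' := by
            simp [Fin.ext_iff]
            omega
          simp [this]
      | right j =>
        induction k using Fin.addCases with
        | left k' =>
          simp only [hDF, ContinuousLinearMap.coe_coe, ContinuousLinearMap.pi_apply,
            Fin.addCases_right, Matrix.reindex_apply, Matrix.submatrix_apply,
            finSumFinEquiv_symm_apply_castAdd, finSumFinEquiv_symm_apply_natAdd,
            Matrix.fromBlocks_apply₂₁, hBmat, Matrix.of_apply]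
        | right k' =>
          simp only [hDF, ContinuousLinearMap.coe_coe, ContinuousLinearMap.pi_apply,
            Fin.addCases_right, Matrix.reindex_apply, Matrix.submatrix_apply,
            finSumFinEquiv_symm_apply_natAdd, Matrix.fromBlocks_apply₂₂, hAmat,
            Matrix.of_apply]
    have hMdet : IsUnit (LinearMap.toMatrix (Pi.basisFun ℝ (Fin (n + p)))
        (Pi.basisFun ℝ (Fin (n + p)))
        ((DF z) : (Fin (n + p) → ℝ) →ₗ[ℝ] (Fin (n + p) → ℝ))).det := by
      rw [LinearMap.toMatrix_eq_toMatrix', hM, Matrix.det_reindex_self,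
        Matrix.det_fromBlocks_zero₁₂, Matrix.det_one, one_mul]
      exact isUnit_iff_ne_zero.2 hdet
    refine ⟨(LinearEquiv.ofIsUnitDet hMdet).toContinuousLinearEquiv, ?_⟩
    apply ContinuousLinearMap.ext
    intro v
    have h1 : ((LinearEquiv.ofIsUnitDet hMdet).toContinuousLinearEquiv :
        (Fin (n + p) → ℝ) → (Fin (n + p) → ℝ)) v = (LinearEquiv.ofIsUnitDet hMdet) v := by
      rw [LinearEquiv.coe_toContinuousLinearEquiv']
    rw [ContinuousLinearEquiv.coe_coe, h1, LinearEquiv.ofIsUnitDet_apply]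
    rfl
  -- continuity of the Jacobian determinant
  have hA0 : (Amat z0).det ≠ 0 := hjac
  have hAcont : ContinuousOn Amat W := by
    apply continuousOn_pi.2
    intro j
    apply continuousOn_pi.2
    intro i
    have h1 : ContinuousOn (fderiv ℝ (f j)) W :=
      (hsmooth j).continuousOn_fderiv_of_isOpen hWopen hone
    exact h1.clm_apply continuousOn_const
  have hdetcont : ContinuousOn (fun z => (Amat z).det) W :=
    (continuous_id.matrix_det).comp_continuousOn hAcont
  set N : Set (Fin (n + p) → ℝ) := W ∩ (fun z => (Amat z).det) ⁻¹' {d : ℝ | d ≠ 0} with hN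
  have hNopen : IsOpen N := hdetcont.isOpen_inter_preimage hWopen isOpen_ne
  have hz0N : z0 ∈ N := ⟨hmem, hA0⟩
  -- local inverse
  obtain ⟨e0, he0⟩ := hequiv z0 hmem hA0
  have hFz0 : ContDiffAt ℝ (⊤ : ℕ∞) F z0 := hFsmooth z0 hmem
  have hFz0' : HasFDerivAt F (e0 : (Fin (n + p) → ℝ) →L[ℝ] (Fin (n + p) → ℝ)) z0 := by
    rw [he0]; exact hFderiv z0 hmem
  set PH := hFz0.toOpenPartialHomeomorph F hFz0' (by simp) with hPH
  have hPHcoe : ⇑PH = F := hFz0.toOpenPartialHomeomorph_coe hFz0' (by simp)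
  have hz0src : z0 ∈ PH.source := hFz0.mem_toOpenPartialHomeomorph_source hFz0' (by simp)
  have hw0tgt : F z0 ∈ PH.target := hFz0.image_mem_toOpenPartialHomeomorph_target hFz0' (by simp)
  set T : Set (Fin (n + p) → ℝ) := PH.target ∩ PH.symm ⁻¹' (N ∩ PH.source) with hT
  have hTopen : IsOpen T :=
    PH.continuousOn_symm.isOpen_inter_preimage PH.open_target (hNopen.inter PH.open_source)
  have hw0T : F z0 ∈ T := by
    refine ⟨hw0tgt, ?_⟩
    have hsy : PH.symm (F z0) = z0 := by
      rw [← hPHcoe]; exact PH.left_inv hz0src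
    simp only [Set.mem_preimage, hsy]
    exact ⟨hz0N, hz0src⟩
  have hsymm_smooth : ∀ w ∈ T, ContDiffAt ℝ (⊤ : ℕ∞) PH.symm w := by
    rintro w ⟨hw1, hw2⟩
    obtain ⟨⟨hzW, hzdet⟩, hzsrc⟩ := hw2
    obtain ⟨e, he⟩ := hequiv _ hzW hzdet
    refine PH.contDiffAt_symm hw1 (f₀' := e) ?_ ?_
    · rw [hPHcoe, he]; exact hFderiv _ hzW
    · rw [hPHcoe]; exact hFsmooth _ hzW
  -- neighborhoods and the map φ
  obtain ⟨ε1, hε1pos, hε1⟩ :=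
    Metric.isOpen_iff.1 (PH.open_source.inter hWopen) z0 ⟨hz0src, hmem⟩
  set az : (Fin n → ℝ) → (Fin (n + p) → ℝ) := fun x => Fin.append x 0 with haz_def
  have haz : ContDiff ℝ (⊤ : ℕ∞) az := by
    rw [contDiff_pi]
    intro i
    induction i using Fin.addCases with
    | left i =>
      simp only [haz_def, Fin.append_left]
      exact (ContinuousLinearMap.proj (R := ℝ) (φ := fun _ : Fin n => ℝ) i).contDiff
    | right j =>
      simp only [haz_def, Fin.append_right, Pi.zero_apply]
      exact contDiff_const
  have hFz0eq : F z0 = az x0 := by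
    funext i
    induction i using Fin.addCases with
    | left i => simp [hF, haz_def, Fin.append_left, hz0]
    | right j => simp [hF, haz_def, Fin.append_right, hzero j]
  set φ : (Fin n → ℝ) → (Fin p → ℝ) := fun x j => PH.symm (az x) (Fin.natAdd n j) with hφ
  have hφsmooth : ∀ x, az x ∈ T → ContDiffAt ℝ (⊤ : ℕ∞) φ x := by
    intro x hx
    have h1 : ContDiffAt ℝ (⊤ : ℕ∞) (fun x => PH.symm (az x)) x :=
      (hsymm_smooth _ hx).comp x haz.contDiffAt
    rw [contDiffAt_pi]
    intro j
    exact ((ContinuousLinearMap.proj (R := ℝ) (φ := fun _ : Fin (n + p) => ℝ)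
      (Fin.natAdd n j)).contDiff.contDiffAt).comp x h1
  have hz0symm : PH.symm (az x0) = z0 := by
    rw [← hFz0eq, ← hPHcoe]
    exact PH.left_inv hz0src
  have hφ0 : φ x0 = y0 := by
    funext j
    simp [hφ, hz0symm, hz0, Fin.append_right]
  have hx0T : az x0 ∈ T := hFz0eq ▸ hw0T
  have hopenT1 : IsOpen {x : Fin n → ℝ | az x ∈ T} := hTopen.preimage haz.continuous
  obtain ⟨δ1, hδ1pos, hδ1⟩ := Metric.isOpen_iff.1 hopenT1 x0 hx0T
  set V := sqBall y0 ε1 with hV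
  have hy0V : y0 ∈ V := mem_sqBall_self y0 hε1pos
  have hVopen := isOpen_sqBall y0 ε1
  have hφcont : ContinuousAt φ x0 := (hφsmooth x0 hx0T).continuousAt
  obtain ⟨δ2, hδ2pos, hδ2⟩ := Metric.mem_nhds_iff.1
    (hφcont.preimage_mem_nhds (by rw [hφ0]; exact hVopen.mem_nhds hy0V))
  set ρ : ℝ := min ε1 (min δ1 δ2) with hρ
  have hρpos : 0 < ρ := lt_min hε1pos (lt_min hδ1pos hδ2pos)
  set U := sqBall x0 ρ with hU
  have hUdist : ∀ x ∈ U, dist x x0 < ρ := fun x hx =>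
    (dist_pi_lt_iff hρpos).2 fun i => dist_lt_of_mem_sqBall hρpos hx i
  have hUT : ∀ x ∈ U, az x ∈ T := fun x hx =>
    hδ1 (Metric.mem_ball.2 (lt_of_lt_of_le (hUdist x hx)
      (le_trans (min_le_right _ _) (min_le_left _ _))))
  have hUV_W : ∀ x ∈ U, ∀ y ∈ V, Fin.append x y ∈ PH.source ∩ W := by
    intro x hx y hy
    apply hε1
    rw [Metric.mem_ball, dist_pi_lt_iff hε1pos]
    intro i
    induction i using Fin.addCases with
    | left i =>
      simp only [Fin.append_left, hz0]
      exact lt_of_lt_of_le (dist_lt_of_mem_sqBall hρpos hx i) (min_le_left _ _)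
    | right j =>
      simp only [Fin.append_right, hz0]
      exact dist_lt_of_mem_sqBall hε1pos hy j
  -- the key equivalence
  have key : ∀ x ∈ U, ∀ y ∈ V, ((∀ j, f j (Fin.append x y) = 0) ↔ y = φ x) := by
    intro x hx y hy
    have hxyW := hUV_W x hx y hy
    have hazT : az x ∈ T := hUT x hx
    constructor
    · intro h0
      have hFz : F (Fin.append x y) = az x := by
        funext i
        induction i using Fin.addCases with
        | left i => simp [hF, haz_def, Fin.append_left]
        | right j => simp [hF, haz_def, Fin.append_right, h0 j]
      have hsy : PH.symm (az x) = Fin.append x y := by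
        rw [← hFz, ← hPHcoe]
        exact PH.left_inv hxyW.1
      funext j
      simp [hφ, hsy, Fin.append_right]
    · rintro rfl
      have hri : F (PH.symm (az x)) = az x := by
        rw [← hPHcoe]
        exact PH.right_inv hazT.1
      have hux : ∀ i, PH.symm (az x) (Fin.castAdd p i) = x i := by
        intro i
        have h := congrFun hri (Fin.castAdd p i)
        simpa [hF, haz_def, Fin.append_left] using h
      have huy : ∀ j, f j (PH.symm (az x)) = 0 := by
        intro j
        have h := congrFun hri (Fin.natAdd n j)
        simpa [hF, haz_def, Fin.append_right] using h
      have hueq : Fin.append x (φ x) = PH.symm (az x) := by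
        funext i
        induction i using Fin.addCases with
        | left i => simp [Fin.append_left, (hux i).symm]
        | right j => simp [Fin.append_right, hφ]
      intro j
      rw [hueq]
      exact huy j
  have hmapsto : Set.MapsTo φ U V := by
    intro x hx
    exact hδ2 (Metric.mem_ball.2 (lt_of_lt_of_le (hUdist x hx)
      (le_trans (min_le_right _ _) (min_le_right _ _))))
  have hsm : ContDiffOn ℝ (⊤ : ℕ∞) φ U := fun x hx =>
    (hφsmooth x (hUT x hx)).contDiffWithinAt
  -- the graph of φ is semialgebraic
  have hgraph : IsSemialgebraicMapOn U φ := by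
    unfold IsSemialgebraicMapOn
    have h1 := (isSemialgebraic_sqBall x0 ρ).preimage_poly
      (fun i : Fin n => (MvPolynomial.X (Fin.castAdd p i) : MvPolynomial (Fin (n + p)) ℝ))
    have h2 := (isSemialgebraic_sqBall y0 ε1).preimage_poly
      (fun j : Fin p => (MvPolynomial.X (Fin.natAdd n j) : MvPolynomial (Fin (n + p)) ℝ))
    simp only [MvPolynomial.eval_X] at h1 h2
    have h3 : ∀ j, IsSemialgebraic {z : Fin (n + p) → ℝ | z ∈ W ∧ f j z = 0} :=
      fun j => isSemialgebraic_zeroSet (hsa j)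
    have hfinal := h1.inter (h2.inter (IsSemialgebraic.iInter h3))
    convert hfinal using 1
    ext z
    simp only [Set.mem_setOf_eq, Set.mem_inter_iff, Set.mem_iInter]
    constructor
    · rintro ⟨x, hx, rfl⟩
      have hc : (fun i => Fin.append x (φ x) (Fin.castAdd p i)) = x := by
        funext i; simp [Fin.append_left]
      have hn' : (fun j => Fin.append x (φ x) (Fin.natAdd n j)) = φ x := by
        funext j; simp [Fin.append_right]
      refine ⟨?_, ?_, ?_⟩
      · rw [hc]; exact hx
      · rw [hn']; exact hmapsto hx
      · intro j
        exact ⟨(hUV_W x hx _ (hmapsto hx)).2, ((key x hx (φ x) (hmapsto hx)).2 rfl) j⟩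
    · rintro ⟨h1', h2', h3'⟩
      refine ⟨fun i => z (Fin.castAdd p i), h1', ?_⟩
      have hy : (fun j => z (Fin.natAdd n j)) = φ (fun i => z (Fin.castAdd p i)) := by
        apply (key _ h1' _ h2').1
        intro j
        rw [append_comp_eq z]
        exact (h3' j).2
      rw [← hy, append_comp_eq z]
  exact ⟨U, V, φ, isOpen_sqBall x0 ρ, isSemialgebraic_sqBall x0 ρ, mem_sqBall_self x0 hρpos,
    hVopen, isSemialgebraic_sqBall y0 ε1, hy0V, hmapsto, hsm, hgraph, hφ0, key⟩
end
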